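/- arXiv:2105.00563 — 8 statements merged into one kernel-verified Lean document; each statement's English description precedes it below -/
import Mathlib

section
/- Quad Lemma: Let A, B, C, D : ℝ → ℂ × ℂ be functions that are continuous on a neighborhood of 0, and let σ : ℝ → ℂ be a function with σ(s) ≠ 0 for all s ≠ 0 in some neighborhood of 0. Assume A(0) ≠ C(0), and assume there exist constants M > 0 and δ > 0 such that for all s with 0 < |s| < δ one has |area(A(s), C(s), B(s))| ≤ M·|σ(s)| and |area(A(s), C(s), D(s))| ≤ M·|σ(s)|. Then there exist constants M' > 0 and δ' > 0 such that for all s with 0 < |s| < δ' one has |area(A(s), B(s), D(s))| ≤ M'·|σ(s)| and |area(C(s), B(s), D(s))| ≤ M'·|σ(s)|. -/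
/-- The signed area of the ordered triangle `(p, q, r)` in the complex plane `ℂ × ℂ`. -/
noncomputable def triArea (p q r : ℂ × ℂ) : ℂ :=
  ((q.1 - p.1) * (r.2 - p.2) - (r.1 - p.1) * (q.2 - p.2)) / 2

noncomputable def crossQL (u v : ℂ × ℂ) : ℂ := u.1 * v.2 - v.1 * u.2

lemma plueckerQL (u v w e : ℂ × ℂ) :
    crossQL u v * crossQL w e = crossQL u w * crossQL v e - crossQL u e * crossQL v w := by
  simp only [crossQL]; ring

lemma cross_e_boundQL (x e : ℂ × ℂ) (K : ℝ) (hx : ‖x‖ ≤ 2 * K)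
    (h1 : ‖e.1‖ ≤ 1) (h2 : ‖e.2‖ ≤ 1) :
    ‖crossQL x e‖ ≤ 4 * K := by
  have hx1 : ‖x.1‖ ≤ 2 * K := le_trans (norm_fst_le x) hx
  have hx2 : ‖x.2‖ ≤ 2 * K := le_trans (norm_snd_le x) hx
  have h0 : (0:ℝ) ≤ 2 * K := le_trans (norm_nonneg x) hx
  have n1 : (0:ℝ) ≤ ‖x.1‖ := norm_nonneg _
  have n2 : (0:ℝ) ≤ ‖x.2‖ := norm_nonneg _
  have n3 : (0:ℝ) ≤ ‖e.1‖ := norm_nonneg _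
  have n4 : (0:ℝ) ≤ ‖e.2‖ := norm_nonneg _
  calc ‖crossQL x e‖
      ≤ ‖x.1 * e.2‖ + ‖e.1 * x.2‖ := by
        simp only [crossQL]
        exact norm_sub_le _ _
    _ = ‖x.1‖ * ‖e.2‖ + ‖e.1‖ * ‖x.2‖ := by
        rw [norm_mul, norm_mul]
    _ ≤ 4 * K := by nlinarith

lemma main_boundQL (a b d ww e : ℂ × ℂ) (σa M K c : ℝ)
    (hc : 0 < c) (hK : 0 ≤ K) (hσa : 0 ≤ σa)
    (hfe : c ≤ ‖crossQL ww e‖)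
    (he1 : ‖e.1‖ ≤ 1) (he2 : ‖e.2‖ ≤ 1)
    (h1 : ‖crossQL (b - a) ww‖ ≤ 2 * (M * σa))
    (h2 : ‖crossQL (d - a) ww‖ ≤ 2 * (M * σa))
    (hb : ‖b - a‖ ≤ 2 * K) (hd : ‖d - a‖ ≤ 2 * K) :
    ‖triArea a b d‖ ≤ 8 * M * K / c * σa := by
  have hbe : ‖crossQL (b - a) e‖ ≤ 4 * K := cross_e_boundQL _ _ _ hb he1 he2
  have hde : ‖crossQL (d - a) e‖ ≤ 4 * K := cross_e_boundQL _ _ _ hd he1 he2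
  have hMσ : (0:ℝ) ≤ 2 * (M * σa) := le_trans (norm_nonneg _) h1
  have hK4 : (0:ℝ) ≤ 4 * K := by linarith
  have key : ‖crossQL (b - a) (d - a)‖ * c ≤ 16 * (M * σa * K) := by
    calc ‖crossQL (b - a) (d - a)‖ * c
        ≤ ‖crossQL (b - a) (d - a)‖ * ‖crossQL ww e‖ := by
          gcongr
      _ = ‖crossQL (b - a) ww * crossQL (d - a) e
            - crossQL (b - a) e * crossQL (d - a) ww‖ := by
          rw [← norm_mul, plueckerQL]
      _ ≤ ‖crossQL (b - a) ww * crossQL (d - a) e‖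
            + ‖crossQL (b - a) e * crossQL (d - a) ww‖ := by
          exact norm_sub_le _ _
      _ = ‖crossQL (b - a) ww‖ * ‖crossQL (d - a) e‖
            + ‖crossQL (b - a) e‖ * ‖crossQL (d - a) ww‖ := by
          rw [norm_mul, norm_mul]
      _ ≤ 2 * (M * σa) * (4 * K) + 4 * K * (2 * (M * σa)) := by
          gcongr <;> first
            | assumption
            | exact norm_nonneg _
      _ = 16 * (M * σa * K) := by ring
  have hta : triArea a b d = crossQL (b - a) (d - a) / 2 := by
    simp [triArea, crossQL]
  have h3 : ‖crossQL (b - a) (d - a)‖ ≤ 16 * (M * σa * K) / c :=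
    (le_div_iff₀ hc).mpr key
  rw [hta, norm_div, Complex.norm_two]
  calc ‖crossQL (b - a) (d - a)‖ / 2 ≤ (16 * (M * σa * K) / c) / 2 := by linarith
    _ = 8 * M * K / c * σa := by field_simp; ring

/-- **Quad Lemma.** If `A, B, C, D` are continuous near `0`, `σ` is nonvanishing on a deleted
neighborhood of `0`, `A 0 ≠ C 0`, and the areas of `ACB` and `ACD` are bounded by a constant
multiple of `|σ|` on a deleted neighborhood of `0`, then so are the areas of `ABD` and `CBD`. -/
theorem quad_lemma (A B C D : ℝ → ℂ × ℂ) (σ : ℝ → ℂ)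
    (U : Set ℝ) (hU : U ∈ nhds (0 : ℝ))
    (hA : ContinuousOn A U) (hB : ContinuousOn B U)
    (hC : ContinuousOn C U) (hD : ContinuousOn D U)
    (δ₀ : ℝ) (hδ₀ : 0 < δ₀)
    (hσ : ∀ s : ℝ, 0 < |s| → |s| < δ₀ → σ s ≠ 0)
    (hAC : A 0 ≠ C 0)
    (M : ℝ) (hM : 0 < M) (δ : ℝ) (hδ : 0 < δ)
    (hACB : ∀ s : ℝ, 0 < |s| → |s| < δ →
      ‖triArea (A s) (C s) (B s)‖ ≤ M * ‖σ s‖)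
    (hACD : ∀ s : ℝ, 0 < |s| → |s| < δ →
      ‖triArea (A s) (C s) (D s)‖ ≤ M * ‖σ s‖) :
    ∃ M' δ' : ℝ, 0 < M' ∧ 0 < δ' ∧ ∀ s : ℝ, 0 < |s| → |s| < δ' →
      ‖triArea (A s) (B s) (D s)‖ ≤ M' * ‖σ s‖ ∧
      ‖triArea (C s) (B s) (D s)‖ ≤ M' * ‖σ s‖ := by
  have hA0 : ContinuousAt A 0 := hA.continuousAt hU
  have hB0 : ContinuousAt B 0 := hB.continuousAt hU
  have hC0 : ContinuousAt C 0 := hC.continuousAt hU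
  have hD0 : ContinuousAt D 0 := hD.continuousAt hU
  have hw0 : C 0 - A 0 ≠ 0 := sub_ne_zero.mpr (Ne.symm hAC)
  obtain ⟨e, he0, he1, he2⟩ : ∃ e : ℂ × ℂ, crossQL (C 0 - A 0) e ≠ 0 ∧
      ‖e.1‖ ≤ 1 ∧ ‖e.2‖ ≤ 1 := by
    by_cases h : (C 0 - A 0).1 = 0
    · have h2 : (C 0 - A 0).2 ≠ 0 := by
        intro h2; exact hw0 (Prod.ext h h2)
      have hcr : crossQL (C 0 - A 0) ((1:ℂ), (0:ℂ)) = -(C 0 - A 0).2 := by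
        simp [crossQL]
      exact ⟨(1, 0), by rw [hcr]; exact neg_ne_zero.mpr h2, by simp, by simp⟩
    · have hcr : crossQL (C 0 - A 0) ((0:ℂ), (1:ℂ)) = (C 0 - A 0).1 := by
        simp [crossQL]
      exact ⟨(0, 1), by rw [hcr]; exact h, by simp, by simp⟩
  set f : ℝ → ℂ := fun s => crossQL (C s - A s) e with hf_def
  have hf0 : ContinuousAt f 0 := by
    have h := hC0.sub hA0
    exact ((h.fst.mul continuousAt_const).sub (continuousAt_const.mul h.snd))
  set c : ℝ := ‖f 0‖ / 2 with hc_def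
  have hfpos : 0 < ‖f 0‖ := norm_pos_iff.mpr he0
  have hc : 0 < c := by rw [hc_def]; positivity
  set K : ℝ := ‖A 0‖ + ‖B 0‖ + ‖C 0‖ + ‖D 0‖ + 1 with hK_def
  have hK : 0 < K := by positivity
  have hevf : ∀ᶠ s in nhds (0:ℝ), c < ‖f s‖ := by
    have ht : Filter.Tendsto (fun s => ‖f s‖) (nhds 0)
        (nhds (‖f 0‖)) := continuous_norm.continuousAt.comp hf0
    exact ht.eventually_const_lt (by rw [hc_def]; linarith)
  have normlt : ∀ (F : ℝ → ℂ × ℂ), ContinuousAt F 0 → ‖F 0‖ + 1 ≤ K →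
      ∀ᶠ s in nhds (0:ℝ), ‖F s‖ < K := by
    intro F hF hFK
    exact (hF.norm).eventually_lt_const (by linarith)
  have hKA : ‖A 0‖ + 1 ≤ K := by
    rw [hK_def]
    have := norm_nonneg (B 0); have := norm_nonneg (C 0); have := norm_nonneg (D 0); linarith
  have hKB : ‖B 0‖ + 1 ≤ K := by
    rw [hK_def]
    have := norm_nonneg (A 0); have := norm_nonneg (C 0); have := norm_nonneg (D 0); linarith
  have hKC : ‖C 0‖ + 1 ≤ K := by
    rw [hK_def]
    have := norm_nonneg (A 0); have := norm_nonneg (B 0); have := norm_nonneg (D 0); linarith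
  have hKD : ‖D 0‖ + 1 ≤ K := by
    rw [hK_def]
    have := norm_nonneg (A 0); have := norm_nonneg (B 0); have := norm_nonneg (C 0); linarith
  have hev : ∀ᶠ s in nhds (0:ℝ), c < ‖f s‖ ∧ ‖A s‖ < K ∧ ‖B s‖ < K ∧
      ‖C s‖ < K ∧ ‖D s‖ < K := by
    filter_upwards [hevf, normlt A hA0 hKA, normlt B hB0 hKB, normlt C hC0 hKC,
      normlt D hD0 hKD] with s h1 h2 h3 h4 h5
    exact ⟨h1, h2, h3, h4, h5⟩
  rw [Metric.eventually_nhds_iff] at hev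
  obtain ⟨ε, hε, hball⟩ := hev
  refine ⟨8 * M * K / c, min ε δ, by positivity, lt_min hε hδ, ?_⟩
  intro s hs hs'
  have hsδ : |s| < δ := lt_of_lt_of_le hs' (min_le_right _ _)
  have hds : dist s 0 < ε := by
    rw [Real.dist_eq, sub_zero]; exact lt_of_lt_of_le hs' (min_le_left _ _)
  obtain ⟨hf, hAs, hBs, hCs, hDs⟩ := hball hds
  have hσa : 0 ≤ ‖σ s‖ := norm_nonneg _
  have hfe : c ≤ ‖crossQL (C s - A s) e‖ := le_of_lt hf
  have idB : crossQL (B s - A s) (C s - A s) = -(2 * triArea (A s) (C s) (B s)) := by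
    simp only [crossQL, triArea, Prod.fst_sub, Prod.snd_sub]; ring
  have idD : crossQL (D s - A s) (C s - A s) = -(2 * triArea (A s) (C s) (D s)) := by
    simp only [crossQL, triArea, Prod.fst_sub, Prod.snd_sub]; ring
  have idB' : crossQL (B s - C s) (C s - A s) = -(2 * triArea (A s) (C s) (B s)) := by
    simp only [crossQL, triArea, Prod.fst_sub, Prod.snd_sub]; ring
  have idD' : crossQL (D s - C s) (C s - A s) = -(2 * triArea (A s) (C s) (D s)) := by
    simp only [crossQL, triArea, Prod.fst_sub, Prod.snd_sub]; ring
  have hACBs := hACB s hs hsδ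
  have hACDs := hACD s hs hsδ
  have b2 : ∀ x y : ℂ × ℂ, ‖x‖ < K → ‖y‖ < K → ‖x - y‖ ≤ 2 * K := by
    intro x y hx hy
    calc ‖x - y‖ ≤ ‖x‖ + ‖y‖ := norm_sub_le _ _
      _ ≤ 2 * K := by linarith
  constructor
  · apply main_boundQL (A s) (B s) (D s) (C s - A s) e _ M K c hc (le_of_lt hK) hσa hfe he1 he2
    · rw [idB, norm_neg, norm_mul, Complex.norm_two]; linarith
    · rw [idD, norm_neg, norm_mul, Complex.norm_two]; linarith
    · exact b2 _ _ hBs hAs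
    · exact b2 _ _ hDs hAs
  · apply main_boundQL (C s) (B s) (D s) (C s - A s) e _ M K c hc (le_of_lt hK) hσa hfe he1 he2
    · rw [idB', norm_neg, norm_mul, Complex.norm_two]; linarith
    · rw [idD', norm_neg, norm_mul, Complex.norm_two]; linarith
    · exact b2 _ _ hBs hCs
    · exact b2 _ _ hDs hCs
end

section
/- Nugget on wheels: Let n ≥ 3 and let S₀, …, S_{n−1}, R : ℝ → ℂ × ℂ be continuous functions (indices taken modulo n). Suppose there are points P ≠ Q in ℂ × ℂ with Sᵢ(0) = P for all i and R(0) = Q. Define the polygon area area(⬠(s)) := Σ_{i<n} area(O, Sᵢ(s), S_{i+1 mod n}(s)), where O = (0,0). Suppose there is δ > 0 such that Σ_{i<n} |area(Sᵢ(s), S_{i+1 mod n}(s), R(s))| ≠ 0 for all s with 0 < |s| < δ. Then the quotient |area(⬠(s))| / Σ_{i<n} |area(Sᵢ(s), S_{i+1 mod n}(s), R(s))| tends to 0 as s tends to 0 with s ≠ 0. -/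
namespace NuggetAux

noncomputable def pdet (u v : ℂ × ℂ) : ℂ := u.1 * v.2 - u.2 * v.1

lemma triArea_eq (p q r : ℂ × ℂ) :
    triArea p q r = pdet (p - r) (q - r) / 2 := by
  simp only [triArea, pdet, Prod.fst_sub, Prod.snd_sub]
  ring

lemma triArea_zero (p q r : ℂ × ℂ) :
    triArea ((0,0) : ℂ × ℂ) p q
      = triArea p q r + (pdet p r / 2 - pdet q r / 2) := by
  simp only [triArea, pdet]
  ring

lemma key (w e x y : ℂ × ℂ) (hd : pdet w e ≠ 0) (hx : pdet x e ≠ 0) (hy : pdet y e ≠ 0) :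
    pdet x y / 2 =
      pdet w e / 2 * (pdet x e / pdet w e * (pdet y e / pdet w e)) *
        (pdet w y / (pdet w e * (pdet y e / pdet w e))
          - pdet w x / (pdet w e * (pdet x e / pdet w e))) := by
  simp only [pdet] at hd hx hy ⊢
  field_simp
  ring

lemma sum_comp {n : ℕ} [NeZero n] (c : Fin n) (f : Fin n → ℂ) :
    ∑ i : Fin n, f (i + c) = ∑ i : Fin n, f i :=
  Fintype.sum_equiv (Equiv.addRight c) _ _ (fun _ => rfl)

end NuggetAux

open NuggetAux Finset Filter

/-- **Nugget on wheels.** If the vertices `S i` of a wheel with hub `R` all tend to a common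
point `P` as `s → 0` while the hub tends to a different point `Q`, then the area of the polygon
formed by the `S i` becomes small relative to the sum of the absolute values of the areas of the
spoke triangles `(S i, S (i+1), R)`. -/
theorem nugget_on_wheels (n : ℕ) (hn : 3 ≤ n)
    (S : Fin n → ℝ → ℂ × ℂ) (R : ℝ → ℂ × ℂ)
    (hS : ∀ i, Continuous (S i)) (hR : Continuous R)
    (P Q : ℂ × ℂ) (hPQ : P ≠ Q)
    (hS0 : ∀ i, S i 0 = P) (hR0 : R 0 = Q)
    (δ : ℝ) (hδ : 0 < δ)
    (hden : ∀ s : ℝ, 0 < |s| → |s| < δ →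
      (∑ i : Fin n,  ‖triArea (S i s) (S (i + ⟨1, by omega⟩) s) (R s)‖) ≠ 0) :
    Filter.Tendsto
      (fun s : ℝ =>
         ‖∑ i : Fin n, triArea ((0, 0) : ℂ × ℂ) (S i s) (S (i + ⟨1, by omega⟩) s)‖ /
          ∑ i : Fin n,  ‖triArea (S i s) (S (i + ⟨1, by omega⟩) s) (R s)‖)
      (nhdsWithin 0 {(0 : ℝ)}ᶜ) (nhds 0) := by
  haveI : NeZero n := ⟨by omega⟩
  classical
  have hc : (1:ℕ) < n := by omega
  set c : Fin n := ⟨1, hc⟩ with hcdef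
  set v : ℂ × ℂ := P - Q with hv
  have hvne : v ≠ 0 := sub_ne_zero.mpr hPQ
  set e : ℂ × ℂ := (-(starRingEnd ℂ) v.2, (starRingEnd ℂ) v.1) with he
  have hve : pdet v e ≠ 0 := by
    have h1 : pdet v e = ((Complex.normSq v.1 + Complex.normSq v.2 : ℝ) : ℂ) := by
      simp only [pdet, he]
      rw [show v.1 * (starRingEnd ℂ) v.1 - v.2 * -(starRingEnd ℂ) v.2
        = v.1 * (starRingEnd ℂ) v.1 + v.2 * (starRingEnd ℂ) v.2 from by ring,
        Complex.mul_conj, Complex.mul_conj]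
      push_cast
      ring
    rw [h1, Complex.ofReal_ne_zero]
    intro h
    apply hvne
    have h2 : Complex.normSq v.1 = 0 ∧ Complex.normSq v.2 = 0 := by
      constructor <;> nlinarith [Complex.normSq_nonneg v.1, Complex.normSq_nonneg v.2]
    exact Prod.ext (Complex.normSq_eq_zero.mp h2.1) (Complex.normSq_eq_zero.mp h2.2)
  have hRt : Tendsto R (nhds 0) (nhds Q) := by rw [← hR0]; exact hR.tendsto 0
  have hSt : ∀ i, Tendsto (S i) (nhds 0) (nhds P) := fun i => by
    rw [← hS0 i]; exact (hS i).tendsto 0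
  have hpdetc : Continuous fun u : ℂ × ℂ => pdet u e := by
    unfold pdet; fun_prop
  have hwd : Tendsto (fun s => pdet (P - R s) e) (nhds 0) (nhds (pdet v e)) := by
    have h : Tendsto (fun s => P - R s) (nhds 0) (nhds (P - Q)) := tendsto_const_nhds.sub hRt
    rw [hv]
    exact (hpdetc.tendsto _).comp h
  have hσ : ∀ i : Fin n, Tendsto (fun s => pdet (S i s - R s) e / pdet (P - R s) e)
      (nhds 0) (nhds 1) := by
    intro i
    have h1 : Tendsto (fun s => pdet (S i s - R s) e) (nhds 0) (nhds (pdet v e)) := by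
      have h : Tendsto (fun s => S i s - R s) (nhds 0) (nhds (P - Q)) := (hSt i).sub hRt
      rw [hv]
      exact (hpdetc.tendsto _).comp h
    have := h1.div hwd hve
    rwa [div_self hve] at this
  rw [Metric.tendsto_nhds]
  intro ε hε
  set η : ℝ := min (1/2) (ε/24) with hηdef
  have hη0 : 0 < η := lt_min (by norm_num) (by positivity)
  have hη2 : η ≤ 1/2 := min_le_left _ _
  have hηε : 12 * η < ε := by
    have h := min_le_right (1/2) (ε/24)
    rw [← hηdef] at h
    nlinarith
  -- eventual facts
  have Eσ : ∀ᶠ s in nhds (0:ℝ), ∀ i : Fin n,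
       ‖pdet (S i s - R s) e / pdet (P - R s) e - 1‖ ≤ η := by
    rw [Filter.eventually_all]
    intro i
    filter_upwards [Metric.tendsto_nhds.mp (hσ i) η hη0] with s hs
    rw [Complex.dist_eq] at hs
    exact le_of_lt hs
  have Ed : ∀ᶠ s in nhds (0:ℝ), pdet (P - R s) e ≠ 0 := hwd.eventually_ne hve
  have Eδ : ∀ᶠ s in nhdsWithin (0:ℝ) {(0:ℝ)}ᶜ,
      (∑ i : Fin n,  ‖triArea (S i s) (S (i + c) s) (R s)‖) ≠ 0 := by
    have hball : ∀ᶠ s in nhds (0:ℝ), |s| < δ := by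
      filter_upwards [Metric.ball_mem_nhds (0:ℝ) hδ] with s hs
      simpa [Real.dist_eq] using hs
    rw [eventually_nhdsWithin_iff]
    filter_upwards [hball] with s hs hs0
    have hs0' : s ≠ 0 := hs0
    exact hden s (abs_pos.mpr hs0') hs
  filter_upwards [Eδ, Eσ.filter_mono nhdsWithin_le_nhds, Ed.filter_mono nhdsWithin_le_nhds]
    with s hDne hσs hds
  show dist ( ‖∑ i : Fin n, triArea ((0, 0) : ℂ × ℂ) (S i s) (S (i + c) s)‖ /
      ∑ i : Fin n,  ‖triArea (S i s) (S (i + c) s) (R s)‖) 0 < ε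
  set σ : Fin n → ℂ := fun i => pdet (S i s - R s) e / pdet (P - R s) e with hσdef
  set q : Fin n → ℂ := fun i =>
    pdet (P - R s) (S i s - R s) / (pdet (P - R s) e * σ i) with hqdef
  have hσs' : ∀ i : Fin n,  ‖σ i - 1‖ ≤ η := hσs
  have hσlow : ∀ i : Fin n, (1:ℝ)/2 ≤  ‖σ i‖ := by
    intro i
    have h := hσs' i
    have h2 : ‖(1:ℂ)‖ - ‖σ i‖ ≤ ‖(1:ℂ) - σ i‖ := norm_sub_norm_le _ _
    simp only [norm_one] at h2
    rw [norm_sub_rev] at h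
    linarith
  have hσne : ∀ i : Fin n, σ i ≠ 0 := by
    intro i
    intro h0
    have := hσlow i
    rw [h0, norm_zero] at this
    linarith
  have hxne : ∀ i : Fin n, pdet (S i s - R s) e ≠ 0 := by
    intro i
    have := hσne i
    rw [hσdef] at this
    exact (div_ne_zero_iff.mp this).1
  have hTid : ∀ i : Fin n, triArea (S i s) (S (i + c) s) (R s)
      = pdet (P - R s) e / 2 * (σ i * σ (i + c)) * (q (i + c) - q i) := by
    intro i
    rw [triArea_eq]
    exact key (P - R s) e _ _ hds (hxne i) (hxne (i + c))
  -- numerator equals sum of spoke areas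
  have hA : (∑ i : Fin n, triArea ((0,0) : ℂ × ℂ) (S i s) (S (i + c) s))
      = ∑ i : Fin n, triArea (S i s) (S (i + c) s) (R s) := by
    have h1 : ∀ i : Fin n, triArea ((0,0) : ℂ × ℂ) (S i s) (S (i + c) s)
        = triArea (S i s) (S (i + c) s) (R s)
          + (pdet (S i s) (R s) / 2 - pdet (S (i + c) s) (R s) / 2) := fun i =>
      triArea_zero _ _ _
    rw [Finset.sum_congr rfl fun i _ => h1 i, Finset.sum_add_distrib,
      Finset.sum_sub_distrib, sum_comp c (fun i => pdet (S i s) (R s) / 2)]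
    ring
  have hsumq : ∑ i : Fin n, (q (i + c) - q i) = 0 := by
    rw [Finset.sum_sub_distrib, sum_comp c q, sub_self]
  have hA2 : (∑ i : Fin n, triArea (S i s) (S (i + c) s) (R s))
      = ∑ i : Fin n, (σ i * σ (i + c) - 1) * (q (i + c) - q i) * (pdet (P - R s) e / 2) := by
    rw [Finset.sum_congr rfl fun i _ => hTid i]
    have h2 : ∑ i : Fin n, pdet (P - R s) e / 2 * (σ i * σ (i + c)) * (q (i + c) - q i)
        = (∑ i : Fin n, (σ i * σ (i + c) - 1) * (q (i + c) - q i) * (pdet (P - R s) e / 2))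
          + pdet (P - R s) e / 2 * ∑ i : Fin n, (q (i + c) - q i) := by
      rw [Finset.mul_sum, ← Finset.sum_add_distrib]
      exact Finset.sum_congr rfl fun i _ => by ring
    rw [h2, hsumq, mul_zero, add_zero]
  have hbound : ∀ i : Fin n,
       ‖(σ i * σ (i + c) - 1) * (q (i + c) - q i) * (pdet (P - R s) e / 2)‖
        ≤ 12 * η *  ‖pdet (P - R s) e / 2 * (σ i * σ (i + c)) * (q (i + c) - q i)‖ := by
    intro i
    have ha := hσs' i
    have hb := hσs' (i + c)
    have hX := hσlow i
    have hY := hσlow (i + c)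
    have htri :  ‖σ i * σ (i + c) - 1‖
        ≤  ‖σ i - 1‖ *  ‖σ (i + c)‖ +  ‖σ (i + c) - 1‖ := by
      have : σ i * σ (i + c) - 1 = (σ i - 1) * σ (i + c) + (σ (i + c) - 1) := by ring
      rw [this]
      calc  ‖(σ i - 1) * σ (i + c) + (σ (i + c) - 1)‖
          ≤  ‖(σ i - 1) * σ (i + c)‖ +  ‖σ (i + c) - 1‖ :=
            norm_add_le _ _
        _ =  ‖σ i - 1‖ *  ‖σ (i + c)‖ +  ‖σ (i + c) - 1‖ := by
            rw [norm_mul]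
    rw [norm_mul, norm_mul, norm_mul, norm_mul, norm_mul]
    have hC : (0:ℝ) ≤  ‖q (i + c) - q i‖ := norm_nonneg _
    have hD : (0:ℝ) ≤  ‖pdet (P - R s) e / 2‖ := norm_nonneg _
    have ha0 : (0:ℝ) ≤  ‖σ i - 1‖ := norm_nonneg _
    have hY0 : (0:ℝ) ≤  ‖σ (i + c)‖ := norm_nonneg _
    have haY :  ‖σ i - 1‖ *  ‖σ (i + c)‖
        ≤ η *  ‖σ (i + c)‖ := mul_le_mul_of_nonneg_right ha hY0
    have h5 :  ‖σ i * σ (i + c) - 1‖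
        ≤ 12 * η * ( ‖σ i‖ *  ‖σ (i + c)‖) := by
      nlinarith [mul_nonneg hη0.le hY0, mul_nonneg (mul_nonneg hη0.le hY0)
        (sub_nonneg.mpr hX), mul_nonneg hη0.le (sub_nonneg.mpr hY)]
    have h6 := mul_le_mul_of_nonneg_right
      (mul_le_mul_of_nonneg_right h5 hC) hD
    nlinarith [h6]
  -- assemble
  have hDpos : 0 < ∑ i : Fin n,  ‖triArea (S i s) (S (i + c) s) (R s)‖ :=
    lt_of_le_of_ne (Finset.sum_nonneg fun i _ => norm_nonneg _) (Ne.symm hDne)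
  have hNle :  ‖∑ i : Fin n, triArea (S i s) (S (i + c) s) (R s)‖
      ≤ 12 * η * ∑ i : Fin n,  ‖triArea (S i s) (S (i + c) s) (R s)‖ := by
    rw [hA2]
    calc  ‖∑ i : Fin n,
          (σ i * σ (i + c) - 1) * (q (i + c) - q i) * (pdet (P - R s) e / 2)‖
        ≤ ∑ i : Fin n, 
          ‖(σ i * σ (i + c) - 1) * (q (i + c) - q i) * (pdet (P - R s) e / 2)‖ :=
          norm_sum_le _ _
      _ ≤ ∑ i : Fin n, 12 * η * 
            ‖pdet (P - R s) e / 2 * (σ i * σ (i + c)) * (q (i + c) - q i)‖ :=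
          Finset.sum_le_sum fun i _ => hbound i
      _ = 12 * η * ∑ i : Fin n,  ‖triArea (S i s) (S (i + c) s) (R s)‖ := by
          rw [Finset.mul_sum]
          exact Finset.sum_congr rfl fun i _ => by rw [← hTid i]
  rw [Real.dist_eq, sub_zero, hA]
  rw [abs_of_nonneg (div_nonneg (norm_nonneg _) (le_of_lt hDpos))]
  rw [div_lt_iff₀ hDpos]
  calc  ‖∑ i : Fin n, triArea (S i s) (S (i + c) s) (R s)‖
      ≤ 12 * η * ∑ i : Fin n,  ‖triArea (S i s) (S (i + c) s) (R s)‖ := hNle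
    _ < ε * ∑ i : Fin n,  ‖triArea (S i s) (S (i + c) s) (R s)‖ :=
        mul_lt_mul_of_pos_right hηε hDpos
end

section
/- Corollary of the Nugget: Let n ≥ 3 and let S₀, …, S_{n−1}, R : ℝ → ℂ × ℂ be continuous functions (indices taken modulo n). Suppose there are points P ≠ Q in ℂ × ℂ with Sᵢ(0) = P for all i and R(0) = Q. Let 3 ≤ k ≤ n and let ι : Fin k → Fin n be strictly increasing, and define the sub-polygon area area(Δ(s)) := Σ_{j<k} area(O, S_{ι(j)}(s), S_{ι(j+1 mod k)}(s)), where O = (0,0). Suppose there is δ > 0 such that Σ_{i<n} |area(Sᵢ(s), S_{i+1 mod n}(s), R(s))| ≠ 0 for all s with 0 < |s| < δ. Then the quotient |area(Δ(s))| / Σ_{i<n} |area(Sᵢ(s), S_{i+1 mod n}(s), R(s))| tends to 0 as s tends to 0 with s ≠ 0. -/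
/-- The "cross product" bilinear form on `ℂ × ℂ`. -/
def xp (x y : ℂ × ℂ) : ℂ := x.1 * y.2 - y.1 * x.2

lemma half_facts (z : ℂ) (hz : ‖(z - 1)‖ < 1/2) :
    1/2 ≤ ‖z‖ ∧ ‖z‖ ≤ 3/2 ∧ z ≠ 0 := by
  have h1 : ‖z‖ ≤ ‖(1:ℂ)‖ + ‖(z - 1)‖ := by
    calc ‖z‖ = ‖(1 + (z - 1))‖ := by ring_nf
      _ ≤ _ := norm_add_le _ _
  have h2 : ‖(1:ℂ)‖ ≤ ‖(z - 1)‖ + ‖z‖ := by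
    calc ‖(1:ℂ)‖ = ‖((1 - z) + z)‖ := by ring_nf
      _ ≤ ‖(1 - z)‖ + ‖z‖ := norm_add_le _ _
      _ = ‖(z - 1)‖ + ‖z‖ := by rw [norm_sub_rev]
  simp only [norm_one] at h1 h2
  refine ⟨by linarith, by linarith, ?_⟩
  intro h
  rw [h] at hz
  simp at hz
  linarith

lemma tele {m : ℕ} [NeZero m] (F : Fin m → ℂ) :
    ∑ i : Fin m, (F (i + 1) - F i) = 0 := by
  rw [Finset.sum_sub_distrib, sub_eq_zero]
  exact Fintype.sum_equiv (Equiv.addRight 1) _ _ (fun i => rfl)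

open Fin.NatCast in
lemma cyclic_var {m : ℕ} [NeZero m] (F : Fin m → ℂ) (x y : Fin m) :
    ‖(F x - F y)‖ ≤ ∑ i : Fin m, ‖(F (i + 1) - F i)‖ := by
  have step : ∀ t : ℕ, ‖(F (y + (t : Fin m)) - F y)‖ ≤
      ∑ i ∈ Finset.range t, ‖(F ((y + (i : Fin m)) + 1) - F (y + (i : Fin m)))‖ := by
    intro t
    induction t with
    | zero => simp
    | succ t ih =>
      rw [Finset.sum_range_succ]
      have hcast : ((t + 1 : ℕ) : Fin m) = (t : Fin m) + 1 := by push_cast; ring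
      rw [hcast, ← add_assoc]
      calc ‖(F (y + (t:Fin m) + 1) - F y)‖
          ≤ ‖(F (y + (t:Fin m) + 1) - F (y + (t:Fin m)))‖
            + ‖(F (y + (t:Fin m)) - F y)‖ := norm_sub_le_norm_sub_add_norm_sub _ _ _
        _ ≤ _ := by linarith [ih]
  have hlt : (x - y).val < m := (x - y).isLt
  have hx : y + (((x - y).val : ℕ) : Fin m) = x := by
    rw [Fin.cast_val_eq_self]; exact add_sub_cancel y x
  have h1 := step ((x - y).val)
  rw [hx] at h1
  refine h1.trans ?_
  have hinj : ∀ a ∈ Finset.range ((x-y).val), ∀ b ∈ Finset.range ((x-y).val),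
      y + (a : Fin m) = y + (b : Fin m) → a = b := by
    intro a ha b hb hab
    have ha' := Finset.mem_range.1 ha
    have hb' := Finset.mem_range.1 hb
    have h2 : (a : Fin m) = (b : Fin m) := add_left_cancel hab
    have h3 := congrArg Fin.val h2
    rw [Fin.val_natCast, Fin.val_natCast] at h3
    rw [Nat.mod_eq_of_lt (by omega), Nat.mod_eq_of_lt (by omega)] at h3
    exact h3
  calc ∑ i ∈ Finset.range ((x-y).val),
        ‖(F ((y + (i : Fin m)) + 1) - F (y + (i : Fin m)))‖
      = ∑ j ∈ (Finset.range ((x-y).val)).image (fun i : ℕ => y + (i : Fin m)),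
          ‖(F (j + 1) - F j)‖ :=
        (Finset.sum_image (g := fun i : ℕ => y + (i : Fin m))
          (f := fun j => ‖(F (j + 1) - F j)‖) hinj).symm
    _ ≤ ∑ i : Fin m, ‖(F (i + 1) - F i)‖ := by
        apply Finset.sum_le_sum_of_subset_of_nonneg (Finset.subset_univ _)
        intro i _ _
        exact norm_nonneg _

lemma key_ineq (n k : ℕ) [NeZero n] [NeZero k]
    (Sv : Fin n → ℂ × ℂ) (Rv P w : ℂ × ℂ) (ι : Fin k → Fin n)
    (hc : ‖(xp (P - Rv) w - 1)‖ < 1/2)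
    (hL : ∀ i : Fin n, ‖(xp (Sv i - Rv) w - 1)‖ < 1/2) :
    ‖(∑ j : Fin k, triArea 0 (Sv (ι j)) (Sv (ι (j + 1))))‖ ≤
      (12 * ∑ j : Fin k, ‖
          (xp (Sv (ι j) - Rv) w * xp (Sv (ι (j + 1)) - Rv) w - 1)‖) *
        ∑ i : Fin n, ‖(triArea (Sv i) (Sv (i + 1)) Rv)‖ := by
  obtain ⟨c, hc_def⟩ : ∃ c, c = xp (P - Rv) w := ⟨_, rfl⟩
  obtain ⟨L, hL_def⟩ : ∃ L : Fin n → ℂ, ∀ i, L i = xp (Sv i - Rv) w := ⟨_, fun _ => rfl⟩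
  obtain ⟨β, hβ_def⟩ : ∃ β : Fin n → ℂ, ∀ i, β i = xp (P - Rv) (Sv i - Rv) := ⟨_, fun _ => rfl⟩
  obtain ⟨B, hB_def⟩ : ∃ B : Fin n → ℂ, ∀ i, B i = β i / L i := ⟨_, fun _ => rfl⟩
  have hcf := half_facts c (by rw [hc_def]; exact hc)
  have hLf : ∀ i, 1/2 ≤ ‖(L i)‖ ∧ ‖(L i)‖ ≤ 3/2 ∧ L i ≠ 0 :=
    fun i => half_facts (L i) (by rw [hL_def]; exact hL i)
  have hc0 : c ≠ 0 := hcf.2.2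
  have h2c0 : (2 : ℂ) * c ≠ 0 := by simp [hc0]
  -- spoke identity
  have den_eq : ∀ i : Fin n, triArea (Sv i) (Sv (i + 1)) Rv
      = L i * L (i + 1) * (B (i + 1) - B i) / (2 * c) := by
    intro i
    have hmain : (2 * c) * triArea (Sv i) (Sv (i + 1)) Rv
        = L i * β (i + 1) - L (i + 1) * β i := by
      rw [hβ_def, hβ_def, hL_def, hL_def, hc_def]
      simp only [triArea, xp, Prod.fst_sub, Prod.snd_sub]
      ring
    have hB2 : L i * L (i + 1) * (B (i + 1) - B i)
        = L i * β (i + 1) - L (i + 1) * β i := by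
      rw [hB_def, hB_def]
      field_simp [(hLf i).2.2, (hLf (i + 1)).2.2]
    rw [hB2, eq_div_iff h2c0]
    linear_combination hmain
  -- numerator identity per j
  obtain ⟨G, hG_def⟩ : ∃ G : Fin k → ℂ,
      ∀ j, G j = B (ι j) / (2 * c) + xp Rv (Sv (ι j)) / 2 := ⟨_, fun _ => rfl⟩
  have num_eq : ∀ j : Fin k, triArea 0 (Sv (ι j)) (Sv (ι (j + 1)))
      = (L (ι j) * L (ι (j + 1)) - 1) * (B (ι (j + 1)) - B (ι j)) / (2 * c)
        + (G (j + 1) - G j) := by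
    intro j
    have hmain2 : (2 * c) * triArea 0 (Sv (ι j)) (Sv (ι (j + 1)))
        = (L (ι j) * β (ι (j + 1)) - L (ι (j + 1)) * β (ι j))
          + c * (xp Rv (Sv (ι (j + 1))) - xp Rv (Sv (ι j))) := by
      rw [hβ_def, hβ_def, hL_def, hL_def, hc_def]
      simp only [triArea, xp, Prod.fst_sub, Prod.snd_sub, Prod.fst_zero, Prod.snd_zero]
      ring
    have hB2 : L (ι j) * L (ι (j + 1)) * (B (ι (j + 1)) - B (ι j))
        = L (ι j) * β (ι (j + 1)) - L (ι (j + 1)) * β (ι j) := by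
      rw [hB_def, hB_def]
      field_simp [(hLf (ι j)).2.2, (hLf (ι (j + 1))).2.2]
    have expand : triArea 0 (Sv (ι j)) (Sv (ι (j + 1)))
        = (L (ι j) * L (ι (j + 1)) * (B (ι (j + 1)) - B (ι j))) / (2 * c)
          + (xp Rv (Sv (ι (j + 1))) - xp Rv (Sv (ι j))) / 2 := by
      rw [hB2, div_add_div _ _ h2c0 two_ne_zero, eq_div_iff (by simp [hc0] : (2*c)*2 ≠ 0)]
      linear_combination 2 * hmain2
    rw [expand, hG_def, hG_def]
    field_simp
    ring
  have sum_eq : ∑ j : Fin k, triArea 0 (Sv (ι j)) (Sv (ι (j + 1)))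
      = ∑ j : Fin k, (L (ι j) * L (ι (j + 1)) - 1) * (B (ι (j + 1)) - B (ι j)) / (2 * c) := by
    rw [Finset.sum_congr rfl (fun j _ => num_eq j), Finset.sum_add_distrib, tele G, add_zero]
  -- variation
  set V : ℝ := ∑ i : Fin n, ‖(B (i + 1) - B i)‖ with hV_def
  have habs2c : ‖(2 * c)‖ = 2 * ‖c‖ := by
    rw [norm_mul, Complex.norm_two]
  have hD : V / 12 ≤ ∑ i : Fin n, ‖(triArea (Sv i) (Sv (i + 1)) Rv)‖ := by
    rw [hV_def, Finset.sum_div]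
    apply Finset.sum_le_sum
    intro i _
    rw [den_eq i, norm_div, norm_mul, norm_mul, habs2c]
    have h1 := (hLf i).1
    have h2 := (hLf (i + 1)).1
    have h3 := hcf.2.1
    have h4 : (0:ℝ) ≤ ‖(B (i + 1) - B i)‖ := norm_nonneg _
    have h5 : (0:ℝ) < 2 * ‖c‖ := by
      have := hcf.1; linarith
    rw [div_le_div_iff₀ (by norm_num) h5]
    have h14 : (1:ℝ)/4 ≤ ‖(L i)‖ * ‖(L (i + 1))‖ := by nlinarith
    nlinarith [mul_le_mul_of_nonneg_right h14 h4, mul_le_mul_of_nonneg_left h3 h4]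
  have hVD : V ≤ 12 * ∑ i : Fin n, ‖(triArea (Sv i) (Sv (i + 1)) Rv)‖ := by
    linarith
  -- numerator bound
  have hnum : ‖(∑ j : Fin k, triArea 0 (Sv (ι j)) (Sv (ι (j + 1))))‖
      ≤ (∑ j : Fin k, ‖(L (ι j) * L (ι (j + 1)) - 1)‖) * V := by
    rw [sum_eq]
    calc ‖(∑ j : Fin k,
            (L (ι j) * L (ι (j + 1)) - 1) * (B (ι (j + 1)) - B (ι j)) / (2 * c))‖
        ≤ ∑ j : Fin k, ‖
            ((L (ι j) * L (ι (j + 1)) - 1) * (B (ι (j + 1)) - B (ι j)) / (2 * c))‖ :=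
          norm_sum_le _ _
      _ ≤ ∑ j : Fin k, ‖(L (ι j) * L (ι (j + 1)) - 1)‖ * V := by
          apply Finset.sum_le_sum
          intro j _
          rw [norm_div, norm_mul, habs2c]
          have h5 : (1:ℝ) ≤ 2 * ‖c‖ := by have := hcf.1; linarith
          have h6 : ‖(B (ι (j + 1)) - B (ι j))‖ ≤ V := cyclic_var B _ _
          have h7 : (0:ℝ) ≤ ‖(L (ι j) * L (ι (j + 1)) - 1)‖ := norm_nonneg _
          calc ‖(L (ι j) * L (ι (j + 1)) - 1)‖ * ‖(B (ι (j + 1)) - B (ι j))‖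
                / (2 * ‖c‖)
              ≤ ‖(L (ι j) * L (ι (j + 1)) - 1)‖
                  * ‖(B (ι (j + 1)) - B (ι j))‖ := div_le_self (by positivity) h5
            _ ≤ ‖(L (ι j) * L (ι (j + 1)) - 1)‖ * V :=
                mul_le_mul_of_nonneg_left h6 h7
      _ = (∑ j : Fin k, ‖(L (ι j) * L (ι (j + 1)) - 1)‖) * V := by
          rw [Finset.sum_mul]
  -- combine
  have hsum_nonneg : (0:ℝ) ≤ ∑ j : Fin k, ‖(L (ι j) * L (ι (j + 1)) - 1)‖ :=
    Finset.sum_nonneg fun _ _ => norm_nonneg _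
  calc ‖(∑ j : Fin k, triArea 0 (Sv (ι j)) (Sv (ι (j + 1))))‖
      ≤ (∑ j : Fin k, ‖(L (ι j) * L (ι (j + 1)) - 1)‖) * V := hnum
    _ ≤ (∑ j : Fin k, ‖(L (ι j) * L (ι (j + 1)) - 1)‖) *
          (12 * ∑ i : Fin n, ‖(triArea (Sv i) (Sv (i + 1)) Rv)‖) :=
        mul_le_mul_of_nonneg_left hVD hsum_nonneg
    _ = (12 * ∑ j : Fin k, ‖(L (ι j) * L (ι (j + 1)) - 1)‖) *
          ∑ i : Fin n, ‖(triArea (Sv i) (Sv (i + 1)) Rv)‖ := by ring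
    _ = _ := by
        congr 2
        apply Finset.sum_congr rfl
        intro j _
        rw [hL_def, hL_def]


/-- **Corollary of the Nugget.** With the setup of the nugget on wheels, for any sub-polygon
determined by a strictly increasing selection `ι : Fin k → Fin n` of at least three of the
vertices `S i`, the area of the sub-polygon becomes small relative to the sum of the absolute
values of the areas of the spoke triangles `(S i, S (i+1), R)`. -/
theorem nugget_corollary (n : ℕ) (hn : 3 ≤ n)
    (S : Fin n → ℝ → ℂ × ℂ) (R : ℝ → ℂ × ℂ)
    (hS : ∀ i, Continuous (S i)) (hR : Continuous R)
    (P Q : ℂ × ℂ) (hPQ : P ≠ Q)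
    (hS0 : ∀ i, S i 0 = P) (hR0 : R 0 = Q)
    (k : ℕ) (hk : 3 ≤ k) (hkn : k ≤ n)
    (ι : Fin k → Fin n) (hι : StrictMono ι)
    (δ : ℝ) (hδ : 0 < δ)
    (hden : ∀ s : ℝ, 0 < |s| → |s| < δ →
      (∑ i : Fin n, ‖(triArea (S i s) (S (i + ⟨1, by omega⟩) s) (R s))‖) ≠ 0) :
    Filter.Tendsto
      (fun s : ℝ =>
        ‖(∑ j : Fin k,
            triArea ((0, 0) : ℂ × ℂ) (S (ι j) s) (S (ι (j + ⟨1, by omega⟩)) s))‖ /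
          ∑ i : Fin n, ‖(triArea (S i s) (S (i + ⟨1, by omega⟩) s) (R s))‖)
      (nhdsWithin 0 {(0 : ℝ)}ᶜ) (nhds 0) := by
  haveI : NeZero n := ⟨by omega⟩
  haveI : NeZero k := ⟨by omega⟩
  have e1n : (⟨1, by omega⟩ : Fin n) = 1 := by
    apply Fin.ext
    simp [Fin.val_one, Nat.mod_eq_of_lt (show 1 < n by omega)]
  have e1k : (⟨1, by omega⟩ : Fin k) = 1 := by
    apply Fin.ext
    simp [Fin.val_one, Nat.mod_eq_of_lt (show 1 < k by omega)]
  simp only [e1n, e1k]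
  obtain ⟨w, hw⟩ : ∃ w : ℂ × ℂ, xp (P - Q) w = 1 := by
    by_cases h1 : P.1 - Q.1 = 0
    · have h2 : P.2 - Q.2 ≠ 0 := by
        intro h2
        apply hPQ
        have f1 : P.1 = Q.1 := by linear_combination h1
        have f2 : P.2 = Q.2 := by linear_combination h2
        exact Prod.ext f1 f2
      exact ⟨(-(P.2 - Q.2)⁻¹, 0), by simp [xp, h1]; field_simp⟩
    · exact ⟨(0, (P.1 - Q.1)⁻¹), by simp [xp]; field_simp⟩
  have hLtend : ∀ i : Fin n, Filter.Tendsto (fun s => xp (S i s - R s) w)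
      (nhds 0) (nhds 1) := by
    intro i
    have hcont : Continuous (fun s => xp (S i s - R s) w) := by
      show Continuous (fun s => (S i s - R s).1 * w.2 - w.1 * (S i s - R s).2)
      have h1 : Continuous (fun s => S i s - R s) := (hS i).sub hR
      exact (h1.fst.mul continuous_const).sub (continuous_const.mul h1.snd)
    apply hcont.tendsto' 0 1
    rw [hS0 i, hR0]
    exact hw
  have hctend : Filter.Tendsto (fun s => xp (P - R s) w) (nhds 0) (nhds 1) := by
    have hcont : Continuous (fun s => xp (P - R s) w) := by
      show Continuous (fun s => (P - R s).1 * w.2 - w.1 * (P - R s).2)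
      have h1 : Continuous (fun s => P - R s) := continuous_const.sub hR
      exact (h1.fst.mul continuous_const).sub (continuous_const.mul h1.snd)
    apply hcont.tendsto' 0 1
    rw [hR0]
    exact hw
  have habs_tend : ∀ (f : ℝ → ℂ), Filter.Tendsto f (nhds 0) (nhds 1) →
      Filter.Tendsto (fun s => ‖(f s - 1)‖) (nhds 0) (nhds 0) := by
    intro f hf
    have h2 : Filter.Tendsto (fun s => f s - 1) (nhds 0) (nhds 0) := by
      simpa using hf.sub (tendsto_const_nhds (x := (1:ℂ)))
    have h3 := (continuous_norm.tendsto 0).comp h2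
    rw [norm_zero] at h3; exact h3
  apply squeeze_zero' (g := fun s => 12 * ∑ j : Fin k, ‖
      (xp (S (ι j) s - R s) w * xp (S (ι (j + 1)) s - R s) w - 1)‖)
  · exact Filter.Eventually.of_forall fun s =>
      div_nonneg (norm_nonneg _)
        (Finset.sum_nonneg fun _ _ => norm_nonneg _)
  · have hev : ∀ᶠ s in nhds (0:ℝ),
        (∀ i : Fin n, ‖(xp (S i s - R s) w - 1)‖ < 1/2) ∧
          ‖(xp (P - R s) w - 1)‖ < 1/2 := by
      apply Filter.Eventually.and
      · rw [Filter.eventually_all]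
        intro i
        exact (habs_tend _ (hLtend i)).eventually_lt_const (by norm_num)
      · exact (habs_tend _ hctend).eventually_lt_const (by norm_num)
    refine (hev.filter_mono nhdsWithin_le_nhds).mono ?_
    intro s hs
    obtain ⟨h1, h2⟩ := hs
    by_cases hD : (∑ i : Fin n, ‖(triArea (S i s) (S (i + 1) s) (R s))‖) = 0
    · rw [hD, div_zero]
      positivity
    · have hDpos : 0 < ∑ i : Fin n, ‖(triArea (S i s) (S (i + 1) s) (R s))‖ :=
        lt_of_le_of_ne (Finset.sum_nonneg fun _ _ => norm_nonneg _) (Ne.symm hD)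
      rw [div_le_iff₀ hDpos]
      exact key_ineq n k (fun i => S i s) (R s) P w ι h2 h1
  · have hterm : ∀ j : Fin k, Filter.Tendsto (fun s => ‖
        (xp (S (ι j) s - R s) w * xp (S (ι (j + 1)) s - R s) w - 1)‖) (nhds 0) (nhds 0) := by
      intro j
      apply habs_tend
      simpa using (hLtend (ι j)).mul (hLtend (ι (j + 1)))
    have hsum := tendsto_finset_sum (Finset.univ : Finset (Fin k)) (fun j _ => hterm j)
    have h12 := hsum.const_mul (12:ℝ)
    simp only [Finset.sum_const_zero, mul_zero] at h12
    exact h12.mono_left nhdsWithin_le_nhds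
end

section
/- Area relation for the triangulation T₂ (the square with two interior vertices u, v on the diagonal structure, with six triangles pqu, qvu, qrv, rsv, suv, pus): for all points p, q, r, s, u, v ∈ ℂ × ℂ with p + r = q + s, the six triangle areas A = area(p,q,u), B = area(q,v,u), C = area(q,r,v), D = area(r,s,v), E = area(s,u,v), F = area(p,u,s) satisfy the quadratic relation A² − 2AC + 2AE + C² + 2CE + E² − B² − 2BD − 2BF − D² + 2DF − F² = 0. -/
/-- **Area relation for `T₂`** (the square with two interior vertices `u, v` and six triangles
`pqu, qvu, qrv, rsv, suv, pus`): in any drawing whose boundary `p q r s` forms a parallelogram,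
the six triangle areas satisfy the stated quadratic relation. -/
theorem area_relation_T2 (p q r s u v : ℂ × ℂ) (hpar : p + r = q + s) :
    let A := triArea p q u
    let B := triArea q v u
    let C := triArea q r v
    let D := triArea r s v
    let E := triArea s u v
    let F := triArea p u s
    A ^ 2 - 2 * A * C + 2 * A * E + C ^ 2 + 2 * C * E + E ^ 2
      - B ^ 2 - 2 * B * D - 2 * B * F - D ^ 2 + 2 * D * F - F ^ 2 = 0 := by
  have h1 : r.1 = q.1 + s.1 - p.1 := by
    have := congrArg Prod.fst hpar; simp at this; linear_combination this
  have h2 : r.2 = q.2 + s.2 - p.2 := by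
    have := congrArg Prod.snd hpar; simp at this; linear_combination this
  simp only [triArea, h1, h2]
  ring
end

section
/- Illustration of the polynomial A − B + C (realization direction): for every triple (a, b, c) ∈ ℂ³ with a − b + c = 0, there exist points p, q, r, s, v ∈ ℂ × ℂ with p + r = q + s and area(s,p,v) = 0 such that area(p,q,v) = a, area(q,r,v) = b, and area(r,s,v) = c. -/
/-- **Illustration of `A − B + C` (realization direction).** Every zero `(a, b, c)` of
`A − B + C` is realized by a drawing of `T₁` with boundary a parallelogram in which the
triangle `spv` is degenerate. -/
theorem illustrate_A_sub_B_add_C (a b c : ℂ) (h : a - b + c = 0) :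
    ∃ p q r s v : ℂ × ℂ, p + r = q + s ∧ triArea s p v = 0 ∧
      triArea p q v = a ∧ triArea q r v = b ∧ triArea r s v = c := by
  refine ⟨(0,0), (0,2), (-b,2), (-b,0), (-a,0), ?_, ?_, ?_, ?_, ?_⟩
  · simp [Prod.ext_iff]
  · simp [triArea]
  · simp only [triArea]; ring
  · simp only [triArea]; ring
  · simp only [triArea]; linear_combination -h
end

section
/- Dissection theorem for two triangles (instance of Main Theorem 2 with the computed second volume of the area encyclopedia): given a dissection of the unit square into 2 triangles, both triangles have area 1/2. -/
open MeasureTheory intervalIntegral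

lemma stdtri_subset : convexHull ℝ {((0:ℝ),(0:ℝ)), (1,0), (0,1)} ⊆
    {p : ℝ × ℝ | 0 ≤ p.1 ∧ 0 ≤ p.2 ∧ p.1 + p.2 ≤ 1} := by
  apply convexHull_min
  · rintro p (rfl|rfl|rfl) <;> norm_num
  · intro p hp q hq s t hs ht hst
    simp only [Set.mem_setOf_eq, Prod.fst_add, Prod.snd_add, Prod.smul_fst, Prod.smul_snd,
      smul_eq_mul] at *
    obtain ⟨hp1, hp2, hp3⟩ := hp; obtain ⟨hq1, hq2, hq3⟩ := hq
    refine ⟨by nlinarith, by nlinarith, by nlinarith⟩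

set_option maxHeartbeats 1000000 in
lemma det_le_one (a1 a2 b1 b2 c1 c2 : ℝ) (h1:0≤a1)(h2:a1≤1)(h3:0≤a2)(h4:a2≤1)
  (h5:0≤b1)(h6:b1≤1)(h7:0≤b2)(h8:b2≤1)(h9:0≤c1)(h10:c1≤1)(h11:0≤c2)(h12:c2≤1) :
    |(b1-a1)*(c2-a2)-(b2-a2)*(c1-a1)| ≤ 1 := by
  rw [abs_le]
  constructor <;>
  · rcases le_total 0 (b1-a1) with hp|hp <;> rcases le_total 0 (c2-a2) with hq|hq <;>
    rcases le_total 0 (b2-a2) with hr|hr <;> rcases le_total 0 (c1-a1) with hs|hs <;>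
    nlinarith


lemma R_measurable : MeasurableSet {p : ℝ × ℝ | 0 ≤ p.1 ∧ 0 ≤ p.2 ∧ p.1 + p.2 ≤ 1} := by
  have : IsClosed {p : ℝ × ℝ | 0 ≤ p.1 ∧ 0 ≤ p.2 ∧ p.1 + p.2 ≤ 1} := by
    refine IsClosed.inter (isClosed_le continuous_const continuous_fst) ?_
    exact IsClosed.inter (isClosed_le continuous_const continuous_snd)
      (isClosed_le (continuous_fst.add continuous_snd) continuous_const)
  exact this.measurableSet

lemma vol_R : volume {p : ℝ × ℝ | 0 ≤ p.1 ∧ 0 ≤ p.2 ∧ p.1 + p.2 ≤ 1} = ENNReal.ofReal (1/2) := by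
  rw [Measure.volume_eq_prod, Measure.prod_apply R_measurable]
  have hsec : ∀ x : ℝ, volume (Prod.mk x ⁻¹' {p : ℝ × ℝ | 0 ≤ p.1 ∧ 0 ≤ p.2 ∧ p.1 + p.2 ≤ 1})
      = (Set.Icc (0:ℝ) 1).indicator (fun x => ENNReal.ofReal (1 - x)) x := by
    intro x
    have : Prod.mk x ⁻¹' {p : ℝ × ℝ | 0 ≤ p.1 ∧ 0 ≤ p.2 ∧ p.1 + p.2 ≤ 1}
        = if 0 ≤ x then Set.Icc 0 (1 - x) else ∅ := by
      ext y; by_cases hx : 0 ≤ x <;> simp [hx, Set.mem_Icc] <;> intro h1 <;> constructor <;> intro <;> linarith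
    rw [this]
    by_cases hx : 0 ≤ x
    · by_cases hx1 : x ≤ 1
      · rw [if_pos hx, Set.indicator_of_mem (Set.mem_Icc.2 ⟨hx, hx1⟩), Real.volume_Icc]
        norm_num
      · rw [if_pos hx, Set.indicator_of_notMem (by simp [Set.mem_Icc]; intro; linarith),
          Real.volume_Icc]
        rw [ENNReal.ofReal_eq_zero.2 (by linarith)]
    · rw [if_neg hx, Set.indicator_of_notMem (by simp [Set.mem_Icc]; intro; linarith)]
      simp
  simp_rw [hsec]
  rw [lintegral_indicator measurableSet_Icc]
  rw [← ofReal_integral_eq_lintegral_ofReal]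
  · rw [MeasureTheory.integral_Icc_eq_integral_Ioc, ← intervalIntegral.integral_of_le zero_le_one]
    have : (∫ (x : ℝ) in (0:ℝ)..1, (1 - x)) = 1/2 := by
      rw [intervalIntegral.integral_sub intervalIntegrable_const intervalIntegrable_id,
        integral_id, intervalIntegral.integral_const]
      norm_num
    rw [this]
  · exact (continuous_const.sub continuous_id).integrableOn_Icc
  · filter_upwards [self_mem_ae_restrict measurableSet_Icc] with x hx
    simp at hx ⊢; linarith [hx.2]


lemma vol_tri_le (a b c : ℝ × ℝ) (ha : a ∈ Set.Icc ((0,0):ℝ×ℝ) (1,1))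
    (hb : b ∈ Set.Icc ((0,0):ℝ×ℝ) (1,1)) (hc : c ∈ Set.Icc ((0,0):ℝ×ℝ) (1,1)) :
    volume (convexHull ℝ {a, b, c}) ≤ ENNReal.ofReal (1/2) := by
  obtain ⟨⟨ha1, ha2⟩, ha3, ha4⟩ : ((0:ℝ) ≤ a.1 ∧ (0:ℝ) ≤ a.2) ∧ a.1 ≤ 1 ∧ a.2 ≤ 1 := by
    obtain ⟨h1, h2⟩ := ha; exact ⟨⟨h1.1, h1.2⟩, h2.1, h2.2⟩
  obtain ⟨⟨hb1, hb2⟩, hb3, hb4⟩ : ((0:ℝ) ≤ b.1 ∧ (0:ℝ) ≤ b.2) ∧ b.1 ≤ 1 ∧ b.2 ≤ 1 := by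
    obtain ⟨h1, h2⟩ := hb; exact ⟨⟨h1.1, h1.2⟩, h2.1, h2.2⟩
  obtain ⟨⟨hc1, hc2⟩, hc3, hc4⟩ : ((0:ℝ) ≤ c.1 ∧ (0:ℝ) ≤ c.2) ∧ c.1 ≤ 1 ∧ c.2 ≤ 1 := by
    obtain ⟨h1, h2⟩ := hc; exact ⟨⟨h1.1, h1.2⟩, h2.1, h2.2⟩
  set L : (ℝ × ℝ) →ₗ[ℝ] (ℝ × ℝ) :=
    Matrix.toLin (Module.Basis.finTwoProd ℝ) (Module.Basis.finTwoProd ℝ)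
      !![b.1 - a.1, c.1 - a.1; b.2 - a.2, c.2 - a.2] with hL
  have hdet : LinearMap.det L = (b.1 - a.1) * (c.2 - a.2) - (b.2 - a.2) * (c.1 - a.1) := by
    rw [hL, LinearMap.det_toLin, Matrix.det_fin_two_of]; ring
  have hLapp : ∀ x : ℝ × ℝ, L x =
      ((b.1 - a.1) * x.1 + (c.1 - a.1) * x.2, (b.2 - a.2) * x.1 + (c.2 - a.2) * x.2) := by
    intro x; rw [hL, Matrix.toLin_finTwoProd_apply]
  have hco : ⇑(AffineEquiv.constVAdd ℝ (ℝ × ℝ) a).toAffineMap = (fun x => a + x) := by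
    funext x; simp [AffineEquiv.constVAdd]; rfl
  have himg : (fun x => a + x) '' (L '' (convexHull ℝ {((0:ℝ),(0:ℝ)), (1,0), (0,1)})) =
      convexHull ℝ {a, b, c} := by
    rw [L.image_convexHull, ← hco,
      (AffineEquiv.constVAdd ℝ (ℝ × ℝ) a).toAffineMap.image_convexHull]
    congr 1
    rw [hco]
    simp only [Set.image_insert_eq, Set.image_singleton, hLapp]
    norm_num [Prod.ext_iff]
    have e1 : a + (b.1 - a.1, b.2 - a.2) = b := by simp [Prod.ext_iff]
    have e2 : a + (c.1 - a.1, c.2 - a.2) = c := by simp [Prod.ext_iff]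
    rw [e1, e2, Prod.mk_zero_zero, add_zero]
  rw [← himg]
  have h1 : volume ((fun x => a + x) '' (L '' (convexHull ℝ {((0:ℝ),(0:ℝ)), (1,0), (0,1)}))) =
      volume (L '' (convexHull ℝ {((0:ℝ),(0:ℝ)), (1,0), (0,1)})) := by
    rw [Set.image_add_left, measure_preimage_add]
  rw [h1, Measure.addHaar_image_linearMap]
  have hdle : |LinearMap.det L| ≤ 1 := by
    rw [hdet]
    exact det_le_one _ _ _ _ _ _ ha1 ha3 ha2 ha4 hb1 hb3 hb2 hb4 hc1 hc3 hc2 hc4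
  calc ENNReal.ofReal |LinearMap.det L| * volume (convexHull ℝ {((0:ℝ),(0:ℝ)), (1,0), (0,1)})
      ≤ 1 * ENNReal.ofReal (1/2) := by
        refine mul_le_mul' ?_ ?_
        · simpa using ENNReal.ofReal_le_ofReal hdle
        · rw [← vol_R]; exact measure_mono stdtri_subset
    _ = ENNReal.ofReal (1/2) := one_mul _


/-- **Dissection theorem for two triangles.** If the unit square is dissected into two
triangles, then both triangles have area `1/2`. -/
theorem dissection_two_triangles (a b c : Fin 2 → ℝ × ℝ)
    (hind : ∀ i, AffineIndependent ℝ ![a i, b i, c i])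
    (T : Fin 2 → Set (ℝ × ℝ))
    (hT : ∀ i, T i = convexHull ℝ {a i, b i, c i})
    (hdisj : ∀ i j, i ≠ j → Disjoint (interior (T i)) (interior (T j)))
    (hcover : (⋃ i, T i) = Set.Icc ((0, 0) : ℝ × ℝ) (1, 1)) :
    ∀ i, (volume (T i)).toReal = 1 / 2 := by
  have hsq : ∀ j, T j ⊆ Set.Icc ((0,0) : ℝ × ℝ) (1,1) := fun j => hcover ▸ Set.subset_iUnion T j
  have hle : ∀ j, volume (T j) ≤ ENNReal.ofReal (1/2) := by
    intro j
    have hma : a j ∈ Set.Icc ((0,0) : ℝ × ℝ) (1,1) :=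
      hsq j (by rw [hT j]; exact subset_convexHull ℝ _ (by simp))
    have hmb : b j ∈ Set.Icc ((0,0) : ℝ × ℝ) (1,1) :=
      hsq j (by rw [hT j]; exact subset_convexHull ℝ _ (by simp))
    have hmc : c j ∈ Set.Icc ((0,0) : ℝ × ℝ) (1,1) :=
      hsq j (by rw [hT j]; exact subset_convexHull ℝ _ (by simp))
    rw [hT j]
    exact vol_tri_le _ _ _ hma hmb hmc
  have hconv : ∀ j, Convex ℝ (T j) := fun j => by rw [hT j]; exact convex_convexHull ℝ _
  have hclosed : ∀ j, IsClosed (T j) := by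
    intro j
    rw [hT j]
    exact ((Set.toFinite _).isCompact_convexHull ℝ).isClosed
  have hfr : ∀ j, volume (frontier (T j)) = 0 := fun j => (hconv j).addHaar_frontier volume
  have hint : ∀ j, volume (interior (T j)) = volume (T j) := by
    intro j
    refine le_antisymm (measure_mono interior_subset) ?_
    calc volume (T j) ≤ volume (interior (T j) ∪ frontier (T j)) :=
          measure_mono (subset_closure.trans (by rw [closure_eq_interior_union_frontier]))
      _ ≤ volume (interior (T j)) + volume (frontier (T j)) := measure_union_le _ _
      _ = volume (interior (T j)) := by rw [hfr j, add_zero]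
  have hsq_vol : volume (Set.Icc ((0,0) : ℝ × ℝ) (1,1)) = 1 := by
    rw [Set.Icc_prod_eq, Measure.volume_eq_prod, Measure.prod_prod]
    simp [Real.volume_Icc]
  have hU : (⋃ i, T i) = T 0 ∪ T 1 := by
    ext x; simp [Fin.exists_fin_two]
  have hsum : volume (T 0) + volume (T 1) = 1 := by
    have h1 : volume (interior (T 0) ∪ interior (T 1)) = volume (T 0) + volume (T 1) := by
      rw [measure_union (hdisj 0 1 (by decide)) isOpen_interior.measurableSet, hint 0, hint 1]
    have hub : volume (interior (T 0) ∪ interior (T 1)) ≤ volume (Set.Icc ((0,0) : ℝ × ℝ) (1,1)) :=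
      measure_mono (Set.union_subset (interior_subset.trans (hsq 0))
        (interior_subset.trans (hsq 1)))
    have hlb : volume (Set.Icc ((0,0) : ℝ × ℝ) (1,1)) ≤
        volume (interior (T 0) ∪ interior (T 1)) := by
      have hsub : Set.Icc ((0,0) : ℝ × ℝ) (1,1) ⊆
          (interior (T 0) ∪ interior (T 1)) ∪ (frontier (T 0) ∪ frontier (T 1)) := by
        rw [← hcover, hU]
        intro x hx
        have hsplit : ∀ j, x ∈ T j → x ∈ interior (T j) ∪ frontier (T j) :=
          fun j hj => by
            have := subset_closure.trans
              (by rw [closure_eq_interior_union_frontier] :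
                closure (T j) ⊆ interior (T j) ∪ frontier (T j)) hj
            exact this
        rcases hx with hx | hx
        · rcases hsplit 0 hx with h | h
          · exact Or.inl (Or.inl h)
          · exact Or.inr (Or.inl h)
        · rcases hsplit 1 hx with h | h
          · exact Or.inl (Or.inr h)
          · exact Or.inr (Or.inr h)
      calc volume (Set.Icc ((0,0) : ℝ × ℝ) (1,1))
          ≤ volume ((interior (T 0) ∪ interior (T 1)) ∪ (frontier (T 0) ∪ frontier (T 1))) :=
            measure_mono hsub
        _ ≤ volume (interior (T 0) ∪ interior (T 1)) + volume (frontier (T 0) ∪ frontier (T 1)) :=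
            measure_union_le _ _
        _ ≤ volume (interior (T 0) ∪ interior (T 1)) +
              (volume (frontier (T 0)) + volume (frontier (T 1))) := by
            gcongr; exact measure_union_le _ _
        _ = volume (interior (T 0) ∪ interior (T 1)) := by rw [hfr 0, hfr 1, add_zero, add_zero]
    rw [← h1, le_antisymm hub hlb, hsq_vol]
  have hne : ∀ j, volume (T j) ≠ ⊤ := by
    intro j
    exact ne_top_of_le_ne_top (by simp) (hle j)
  have htot : (volume (T 0)).toReal + (volume (T 1)).toReal = 1 := by
    rw [← ENNReal.toReal_add (hne 0) (hne 1), hsum, ENNReal.toReal_one]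
  have ht0 : (volume (T 0)).toReal ≤ 1/2 :=
    ENNReal.toReal_le_of_le_ofReal (by norm_num) (hle 0)
  have ht1 : (volume (T 1)).toReal ≤ 1/2 :=
    ENNReal.toReal_le_of_le_ofReal (by norm_num) (hle 1)
  intro i
  fin_cases i
  · show (volume (T 0)).toReal = 1 / 2
    linarith
  · show (volume (T 1)).toReal = 1 / 2
    linarith
end

section
/- The area polynomial of the triangulation T₂, namely A² − 2AC + 2AE + C² + 2CE + E² − B² − 2BD − 2BF − D² + 2DF − F², is irreducible as an element of the polynomial ring ℚ[A, B, C, D, E, F] in six variables over the rationals. -/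
open MvPolynomial

private lemma prime_X0 : Prime (X 0 : MvPolynomial (Fin 5) ℚ) := by
  have h := MulEquiv.prime_iff (MvPolynomial.finSuccEquiv ℚ 4).toMulEquiv
    (p := (X 0 : MvPolynomial (Fin 5) ℚ))
  rw [← h]
  simpa [MvPolynomial.finSuccEquiv_X_zero] using
    (Polynomial.prime_X : Prime (Polynomial.X : Polynomial (MvPolynomial (Fin 4) ℚ)))

private lemma not_dvd_b :
    ¬ (X 0 : MvPolynomial (Fin 5) ℚ) ∣ (4 * X 1 * X 3 + 4 * X 2 * X 4) := by
  rintro ⟨s, hs⟩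
  have := congrArg (MvPolynomial.eval (![0, 1, 0, 1, 0] : Fin 5 → ℚ)) hs
  simp at this

private lemma key_irred :
    Irreducible ((Polynomial.C (X 0) * Polynomial.X +
        Polynomial.C (4 * X 1 * X 3 + 4 * X 2 * X 4)) :
      Polynomial (MvPolynomial (Fin 5) ℚ)) := by
  set a : MvPolynomial (Fin 5) ℚ := X 0 with ha_def
  set b : MvPolynomial (Fin 5) ℚ := 4 * X 1 * X 3 + 4 * X 2 * X 4 with hb_def
  have ha : a ≠ 0 := MvPolynomial.X_ne_zero 0
  set P : Polynomial (MvPolynomial (Fin 5) ℚ) := Polynomial.C a * Polynomial.X + Polynomial.C b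
    with hP_def
  have hdegP : P.degree = 1 := Polynomial.degree_linear ha
  have hPz : P ≠ 0 := fun h => by simp [h] at hdegP
  have hndP : P.natDegree = 1 := Polynomial.natDegree_linear ha
  have hcoeff1 : P.coeff 1 = a := by simp [hP_def]
  have hcoeff0 : P.coeff 0 = b := by simp [hP_def]
  have sub : ∀ f g : Polynomial (MvPolynomial (Fin 5) ℚ),
      P = f * g → g.natDegree = 0 → IsUnit g := by
    intro f g hfg hg0
    obtain ⟨r, rfl⟩ := Polynomial.natDegree_eq_zero.mp hg0
    have hra : r ∣ a := by
      refine ⟨f.coeff 1, ?_⟩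
      rw [← hcoeff1, hfg, Polynomial.coeff_mul_C, mul_comm]
    have hrb : r ∣ b := by
      refine ⟨f.coeff 0, ?_⟩
      rw [← hcoeff0, hfg, Polynomial.coeff_mul_C, mul_comm]
    obtain ⟨s, hs⟩ := hra
    rcases (prime_X0.irreducible.isUnit_or_isUnit hs) with hu | hu
    · exact (Polynomial.isUnit_C).mpr hu
    · exfalso
      apply not_dvd_b
      obtain ⟨t, ht⟩ := hu.exists_right_inv
      have hxr : (X 0 : MvPolynomial (Fin 5) ℚ) ∣ r :=
        ⟨t, by rw [show (X 0 : MvPolynomial (Fin 5) ℚ) = r * s from hs, mul_assoc, ht, mul_one]⟩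
      exact hxr.trans hrb
  constructor
  · intro h
    have := Polynomial.degree_eq_zero_of_isUnit h
    rw [hdegP] at this
    exact absurd this (by decide)
  · intro f g hfg
    have hf : f ≠ 0 := fun h => hPz (by rw [hfg, h, zero_mul])
    have hg : g ≠ 0 := fun h => hPz (by rw [hfg, h, mul_zero])
    have hsum : f.natDegree + g.natDegree = 1 := by
      rw [← Polynomial.natDegree_mul hf hg, ← hfg, hndP]
    rcases Nat.eq_zero_or_pos g.natDegree with h0 | hpos
    · exact Or.inr (sub f g hfg h0)
    · have h0 : f.natDegree = 0 := by omega
      exact Or.inl (sub g f (by rw [hfg, mul_comm]) h0)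

private lemma q_irred :
    Irreducible ((X 0 * X 1 + 4 * X 2 * X 4 + 4 * X 3 * X 5) : MvPolynomial (Fin 6) ℚ) := by
  refine Irreducible.of_map (f := MvPolynomial.finSuccEquiv ℚ 5) ?_
  have h1 : (X 1 : MvPolynomial (Fin 6) ℚ) = X (Fin.succ 0) := rfl
  have h2 : (X 2 : MvPolynomial (Fin 6) ℚ) = X (Fin.succ 1) := rfl
  have h3 : (X 3 : MvPolynomial (Fin 6) ℚ) = X (Fin.succ 2) := rfl
  have h4 : (X 4 : MvPolynomial (Fin 6) ℚ) = X (Fin.succ 3) := rfl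
  have h5 : (X 5 : MvPolynomial (Fin 6) ℚ) = X (Fin.succ 4) := rfl
  have heq : (MvPolynomial.finSuccEquiv ℚ 5)
      ((X 0 * X 1 + 4 * X 2 * X 4 + 4 * X 3 * X 5) : MvPolynomial (Fin 6) ℚ)
      = (Polynomial.C (X 0) * Polynomial.X +
          Polynomial.C (4 * X 1 * X 3 + 4 * X 2 * X 4)) := by
    rw [h1, h2, h3, h4, h5]
    simp only [map_add, map_mul, map_ofNat, MvPolynomial.finSuccEquiv_X_zero,
      MvPolynomial.finSuccEquiv_X_succ, Polynomial.C_add, Polynomial.C_mul, map_ofNat]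
    ring
  rw [heq]
  exact key_irred

private noncomputable def vmap : Fin 6 → MvPolynomial (Fin 6) ℚ := fun i =>
  if i = 0 then X 0 - X 1 - X 2 - X 3 + X 4 - X 5
  else if i = 1 then X 0 + X 1 - X 2 + X 3 + X 4 + X 5
  else X i

private noncomputable def wmap : Fin 6 → MvPolynomial (Fin 6) ℚ := fun i =>
  if i = 0 then MvPolynomial.C (2⁻¹ : ℚ) * (X 0 + X 1) + X 2 - X 4
  else if i = 1 then MvPolynomial.C (2⁻¹ : ℚ) * (X 1 - X 0) - X 3 - X 5
  else X i

private lemma vmap_0 : vmap 0 = X 0 - X 1 - X 2 - X 3 + X 4 - X 5 := rfl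
private lemma vmap_1 : vmap 1 = X 0 + X 1 - X 2 + X 3 + X 4 + X 5 := rfl
private lemma vmap_2 : vmap 2 = X 2 := rfl
private lemma vmap_3 : vmap 3 = X 3 := rfl
private lemma vmap_4 : vmap 4 = X 4 := rfl
private lemma vmap_5 : vmap 5 = X 5 := rfl
private lemma wmap_0 : wmap 0 = MvPolynomial.C (2⁻¹ : ℚ) * (X 0 + X 1) + X 2 - X 4 := rfl
private lemma wmap_1 : wmap 1 = MvPolynomial.C (2⁻¹ : ℚ) * (X 1 - X 0) - X 3 - X 5 := rfl
private lemma wmap_2 : wmap 2 = X 2 := rfl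
private lemma wmap_3 : wmap 3 = X 3 := rfl
private lemma wmap_4 : wmap 4 = X 4 := rfl
private lemma wmap_5 : wmap 5 = X 5 := rfl

private lemma hhalf : (MvPolynomial.C (2⁻¹ : ℚ) : MvPolynomial (Fin 6) ℚ) * 2 = 1 := by
  rw [show (2 : MvPolynomial (Fin 6) ℚ) = MvPolynomial.C (2 : ℚ) by
    rw [map_ofNat], ← MvPolynomial.C_mul]
  norm_num

private lemma aeval_C' (u : Fin 6 → MvPolynomial (Fin 6) ℚ) (c : ℚ) :
    aeval u (MvPolynomial.C c) = MvPolynomial.C c := by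
  simp [MvPolynomial.algebraMap_eq]

/-- The area polynomial of the triangulation `T₂`, namely
`A² − 2AC + 2AE + C² + 2CE + E² − B² − 2BD − 2BF − D² + 2DF − F²` (with variables
`A, B, C, D, E, F` as `X 0, …, X 5`), is irreducible in `ℚ[A, B, C, D, E, F]`. -/
theorem area_polynomial_T2_irreducible :
    Irreducible
      ((X 0) ^ 2 - 2 * X 0 * X 2 + 2 * X 0 * X 4 + (X 2) ^ 2 + 2 * X 2 * X 4 + (X 4) ^ 2
          - (X 1) ^ 2 - 2 * X 1 * X 3 - 2 * X 1 * X 5 - (X 3) ^ 2 + 2 * X 3 * X 5 - (X 5) ^ 2 :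
        MvPolynomial (Fin 6) ℚ) := by
  have hφψ : (aeval vmap).comp (aeval wmap) = AlgHom.id ℚ (MvPolynomial (Fin 6) ℚ) := by
    apply MvPolynomial.algHom_ext
    intro i
    fin_cases i
    · simp only [AlgHom.coe_comp, Function.comp_apply, AlgHom.coe_id, id_eq,
        MvPolynomial.aeval_X]
      show aeval vmap (wmap 0) = X 0
      rw [wmap_0]
      simp only [map_add, map_sub, map_mul, aeval_C', MvPolynomial.aeval_X,
        vmap_0, vmap_1, vmap_2, vmap_4]
      linear_combination (X 0 - X 2 + X 4 : MvPolynomial (Fin 6) ℚ) * hhalf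
    · simp only [AlgHom.coe_comp, Function.comp_apply, AlgHom.coe_id, id_eq,
        MvPolynomial.aeval_X]
      show aeval vmap (wmap 1) = X 1
      rw [wmap_1]
      simp only [map_add, map_sub, map_mul, aeval_C', MvPolynomial.aeval_X,
        vmap_0, vmap_1, vmap_3, vmap_5]
      linear_combination (X 1 + X 3 + X 5 : MvPolynomial (Fin 6) ℚ) * hhalf
    · simp only [AlgHom.coe_comp, Function.comp_apply, AlgHom.coe_id, id_eq,
        MvPolynomial.aeval_X]
      show aeval vmap (wmap 2) = X 2
      rw [wmap_2, MvPolynomial.aeval_X, vmap_2]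
    · simp only [AlgHom.coe_comp, Function.comp_apply, AlgHom.coe_id, id_eq,
        MvPolynomial.aeval_X]
      show aeval vmap (wmap 3) = X 3
      rw [wmap_3, MvPolynomial.aeval_X, vmap_3]
    · simp only [AlgHom.coe_comp, Function.comp_apply, AlgHom.coe_id, id_eq,
        MvPolynomial.aeval_X]
      show aeval vmap (wmap 4) = X 4
      rw [wmap_4, MvPolynomial.aeval_X, vmap_4]
    · simp only [AlgHom.coe_comp, Function.comp_apply, AlgHom.coe_id, id_eq,
        MvPolynomial.aeval_X]
      show aeval vmap (wmap 5) = X 5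
      rw [wmap_5, MvPolynomial.aeval_X, vmap_5]
  have hψφ : (aeval wmap).comp (aeval vmap) = AlgHom.id ℚ (MvPolynomial (Fin 6) ℚ) := by
    apply MvPolynomial.algHom_ext
    intro i
    fin_cases i
    · simp only [AlgHom.coe_comp, Function.comp_apply, AlgHom.coe_id, id_eq,
        MvPolynomial.aeval_X]
      show aeval wmap (vmap 0) = X 0
      rw [vmap_0]
      simp only [map_add, map_sub, map_mul, aeval_C', MvPolynomial.aeval_X,
        wmap_0, wmap_1, wmap_2, wmap_3, wmap_4, wmap_5]
      linear_combination (X 0 : MvPolynomial (Fin 6) ℚ) * hhalf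
    · simp only [AlgHom.coe_comp, Function.comp_apply, AlgHom.coe_id, id_eq,
        MvPolynomial.aeval_X]
      show aeval wmap (vmap 1) = X 1
      rw [vmap_1]
      simp only [map_add, map_sub, map_mul, aeval_C', MvPolynomial.aeval_X,
        wmap_0, wmap_1, wmap_2, wmap_3, wmap_4, wmap_5]
      linear_combination (X 1 : MvPolynomial (Fin 6) ℚ) * hhalf
    · simp only [AlgHom.coe_comp, Function.comp_apply, AlgHom.coe_id, id_eq,
        MvPolynomial.aeval_X]
      show aeval wmap (vmap 2) = X 2
      rw [vmap_2, MvPolynomial.aeval_X, wmap_2]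
    · simp only [AlgHom.coe_comp, Function.comp_apply, AlgHom.coe_id, id_eq,
        MvPolynomial.aeval_X]
      show aeval wmap (vmap 3) = X 3
      rw [vmap_3, MvPolynomial.aeval_X, wmap_3]
    · simp only [AlgHom.coe_comp, Function.comp_apply, AlgHom.coe_id, id_eq,
        MvPolynomial.aeval_X]
      show aeval wmap (vmap 4) = X 4
      rw [vmap_4, MvPolynomial.aeval_X, wmap_4]
    · simp only [AlgHom.coe_comp, Function.comp_apply, AlgHom.coe_id, id_eq,
        MvPolynomial.aeval_X]
      show aeval wmap (vmap 5) = X 5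
      rw [vmap_5, MvPolynomial.aeval_X, wmap_5]
  set e : MvPolynomial (Fin 6) ℚ ≃ₐ[ℚ] MvPolynomial (Fin 6) ℚ :=
    AlgEquiv.ofAlgHom (aeval vmap) (aeval wmap) hφψ hψφ with he
  have hpq :
      ((X 0) ^ 2 - 2 * X 0 * X 2 + 2 * X 0 * X 4 + (X 2) ^ 2 + 2 * X 2 * X 4 + (X 4) ^ 2
          - (X 1) ^ 2 - 2 * X 1 * X 3 - 2 * X 1 * X 5 - (X 3) ^ 2 + 2 * X 3 * X 5 - (X 5) ^ 2 :
        MvPolynomial (Fin 6) ℚ)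
      = e ((X 0 * X 1 + 4 * X 2 * X 4 + 4 * X 3 * X 5) : MvPolynomial (Fin 6) ℚ) := by
    have h : e ((X 0 * X 1 + 4 * X 2 * X 4 + 4 * X 3 * X 5) : MvPolynomial (Fin 6) ℚ)
        = aeval vmap ((X 0 * X 1 + 4 * X 2 * X 4 + 4 * X 3 * X 5) : MvPolynomial (Fin 6) ℚ) :=
      rfl
    rw [h]
    simp only [map_add, map_mul, map_ofNat, MvPolynomial.aeval_X,
      vmap_0, vmap_1, vmap_2, vmap_3, vmap_4, vmap_5]
    ring
  rw [hpq]
  exact q_irred.map e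
end

section
/- The quartic polynomial A⁴ + 4A³B − 4A³C + 4A³D + 6A²B² − 4A²BC + 4A²BD + 6A²C² − 4A²CD + 6A²D² + 4AB³ + 4AB²C − 4AB²D − 4ABC² − 40ABCD − 4ABD² − 4AC³ − 4AC²D + 4ACD² + 4AD³ + B⁴ + 4B³C − 4B³D + 6B²C² − 4B²CD + 6B²D² + 4BC³ + 4BC²D − 4BCD² − 4BD³ + C⁴ + 4C³D + 6C²D² + 4CD³ + D⁴ (the quartic entry of the fourth volume of the area encyclopedia) is irreducible as an element of the polynomial ring ℚ[A, B, C, D] in four variables over the rationals. -/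
open MvPolynomial

set_option maxHeartbeats 1000000

/-- No rational solution to the quadratic-factor coefficient system. -/
lemma encyc4_aux_system (a b c d : ℚ) (h1 : a + c = 8) (h2 : b + d + a*c = 64)
    (h3 : a*d + b*c = -192) (h4 : b*d = 576) : False := by
  have res : (b + d - 96) * (b + d + 48) * (b + d - 16) = 0 := by
    linear_combination (704*d - 8*d^2 + 3840*c - 64*c*d + c*d^2 - 192*c^2 - 2*b*c*d + 8*b*c^2
        - b*c^3 - b^2*c) * h1
      + (-3840 - 64*d + d^2 + 192*c + 16*c*d - c^2*d + 2*b*d - 8*b*c + b*c^2 + b^2) * h2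
      + (-704 + 8*d + 128*c - 2*c*d - 16*c^2 + c^3) * h3
      + (64 - 32*c + 4*c^2) * h4
  have hsq : (a - c)^2 = 4*(b + d) - 192 := by
    linear_combination (a + c + 8) * h1 - 4 * h2
  rcases mul_eq_zero.mp res with h96 | h16
  · rcases mul_eq_zero.mp h96 with h96 | h48
    · have h192 : (a - c)^2 = 192 := by rw [hsq]; linarith [sub_eq_zero.mp h96]
      have h3sq : ((a-c)/8)^2 = 3 := by rw [div_pow, h192]; norm_num
      have hsq3 : IsSquare (3:ℚ) := ⟨(a-c)/8, by rw [← h3sq]; ring⟩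
      have h3' : IsSquare ((3 : ℕ) : ℚ) := by exact_mod_cast hsq3
      exact Nat.prime_three.prime.not_isSquare (Rat.isSquare_natCast_iff.mp h3')
    · have : (a - c)^2 = -384 := by rw [hsq]; linarith [eq_neg_of_add_eq_zero_left h48]
      nlinarith [sq_nonneg (a - c)]
  · have : (a - c)^2 = -128 := by rw [hsq]; linarith [sub_eq_zero.mp h16]
    nlinarith [sq_nonneg (a - c)]

/-- The specialized quartic admits no factorization into two factors of positive degree. -/
lemma encyc4_qkey (f g : Polynomial ℚ)
    (h : Polynomial.X ^ 4 + 8 * Polynomial.X ^ 3 + 64 * Polynomial.X ^ 2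
        - 192 * Polynomial.X + 576 = f * g) :
    f.natDegree = 0 ∨ g.natDegree = 0 := by
  have hqmonic : (Polynomial.X ^ 4 + 8 * Polynomial.X ^ 3 + 64 * Polynomial.X ^ 2
      - 192 * Polynomial.X + 576 : Polynomial ℚ).Monic := by
    have heq : (Polynomial.X ^ 4 + 8 * Polynomial.X ^ 3 + 64 * Polynomial.X ^ 2
        - 192 * Polynomial.X + 576 : Polynomial ℚ)
        = Polynomial.X ^ 4 + (8 * Polynomial.X ^ 3 + 64 * Polynomial.X ^ 2
        - 192 * Polynomial.X + 576) := by ring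
    rw [heq]
    apply Polynomial.monic_X_pow_add
    have hd : (8 * Polynomial.X ^ 3 + 64 * Polynomial.X ^ 2
        - 192 * Polynomial.X + 576 : Polynomial ℚ).degree ≤ 3 := by compute_degree
    exact lt_of_le_of_lt hd (by norm_num)
  have hqdeg : (Polynomial.X ^ 4 + 8 * Polynomial.X ^ 3 + 64 * Polynomial.X ^ 2
      - 192 * Polynomial.X + 576 : Polynomial ℚ).natDegree = 4 := by compute_degree!
  have hq0 : (Polynomial.X ^ 4 + 8 * Polynomial.X ^ 3 + 64 * Polynomial.X ^ 2
      - 192 * Polynomial.X + 576 : Polynomial ℚ) ≠ 0 := hqmonic.ne_zero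
  have hf0 : f ≠ 0 := by rintro rfl; rw [zero_mul] at h; exact hq0 h
  have hg0 : g ≠ 0 := by rintro rfl; rw [mul_zero] at h; exact hq0 h
  have hdeg : f.natDegree + g.natDegree = 4 := by
    rw [← Polynomial.natDegree_mul hf0 hg0, ← h, hqdeg]
  have hroot : ∀ x : ℚ, (Polynomial.X ^ 4 + 8 * Polynomial.X ^ 3 + 64 * Polynomial.X ^ 2
      - 192 * Polynomial.X + 576 : Polynomial ℚ).eval x ≠ 0 := by
    intro x hx
    simp only [Polynomial.eval_add, Polynomial.eval_sub, Polynomial.eval_mul,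
      Polynomial.eval_pow, Polynomial.eval_X, Polynomial.eval_ofNat] at hx
    nlinarith [sq_nonneg (x ^ 2 + 4 * x), sq_nonneg (x - 2)]
  have hlin : ∀ u v : Polynomial ℚ,
      Polynomial.X ^ 4 + 8 * Polynomial.X ^ 3 + 64 * Polynomial.X ^ 2
        - 192 * Polynomial.X + 576 = u * v → u.natDegree ≠ 1 := by
    intro u v huv hu1
    obtain ⟨a, b, hab⟩ := Polynomial.exists_eq_X_add_C_of_natDegree_le_one hu1.le
    have ha : a ≠ 0 := by rintro rfl; rw [hab] at hu1; simp at hu1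
    apply hroot (-b / a)
    rw [huv, hab]
    simp only [Polynomial.eval_mul, Polynomial.eval_add, Polynomial.eval_C, Polynomial.eval_X]
    field_simp
    ring
  by_contra hcon
  push_neg at hcon
  obtain ⟨hf, hg⟩ := hcon
  have hfle : f.natDegree ≤ 4 := by omega
  interval_cases hfd : f.natDegree
  · omega
  · exact hlin f g h hfd
  · -- degree 2 / 2 case
    have hgd : g.natDegree = 2 := by omega
    have hf3 : f.coeff 3 = 0 := f.coeff_eq_zero_of_natDegree_lt (by omega)
    have hf4 : f.coeff 4 = 0 := f.coeff_eq_zero_of_natDegree_lt (by omega)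
    have hg3 : g.coeff 3 = 0 := g.coeff_eq_zero_of_natDegree_lt (by omega)
    have hg4 : g.coeff 4 = 0 := g.coeff_eq_zero_of_natDegree_lt (by omega)
    have key : ∀ n : ℕ, ((Polynomial.X ^ 4 + 8 * Polynomial.X ^ 3 + 64 * Polynomial.X ^ 2
          - 192 * Polynomial.X + 576 : Polynomial ℚ)).coeff n
          = ∑ x ∈ Finset.range (n+1), f.coeff x * g.coeff (n - x) := by
      intro n
      rw [h, Polynomial.coeff_mul, Finset.Nat.sum_antidiagonal_eq_sum_range_succ_mk]
    have k4 : f.coeff 2 * g.coeff 2 = 1 := by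
      have := key 4
      simp [Finset.sum_range_succ, Polynomial.coeff_X_pow, Polynomial.coeff_X,
        hf3, hf4, hg3, hg4] at this
      linarith [this]
    have k3 : f.coeff 1 * g.coeff 2 + f.coeff 2 * g.coeff 1 = 8 := by
      have := key 3
      simp [Finset.sum_range_succ, Polynomial.coeff_X_pow, Polynomial.coeff_X, hf3, hg3] at this
      linarith [this]
    have k2 : f.coeff 0 * g.coeff 2 + f.coeff 1 * g.coeff 1 + f.coeff 2 * g.coeff 0 = 64 := by
      have := key 2
      simp [Finset.sum_range_succ, Polynomial.coeff_X_pow, Polynomial.coeff_X] at this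
      linarith [this]
    have k1 : f.coeff 0 * g.coeff 1 + f.coeff 1 * g.coeff 0 = -192 := by
      have := key 1
      simp [Finset.sum_range_succ, Polynomial.coeff_X_pow, Polynomial.coeff_X] at this
      linarith [this]
    have k0 : f.coeff 0 * g.coeff 0 = 576 := by
      have := key 0
      simp [Finset.sum_range_succ, Polynomial.coeff_X_pow, Polynomial.coeff_X] at this
      linarith [this]
    -- normalize to monic shape
    refine absurd rfl (fun _ : (0:ℚ) = 0 => ?_)
    apply encyc4_aux_system (f.coeff 1 * g.coeff 2) (f.coeff 0 * g.coeff 2)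
      (f.coeff 2 * g.coeff 1) (f.coeff 2 * g.coeff 0)
    · exact k3
    · linear_combination k2 + f.coeff 1 * g.coeff 1 * k4
    · linear_combination (f.coeff 1 * g.coeff 0 + f.coeff 0 * g.coeff 1) * k4 + k1
    · linear_combination f.coeff 0 * g.coeff 0 * k4 + k0
  · exact hlin g f (by rw [h, mul_comm]) (by omega)
  · omega

noncomputable def encyc4Qrest : Polynomial (MvPolynomial (Fin 3) ℚ) :=
  Polynomial.C (4*X 0 - 4*X 1 + 4*X 2) * Polynomial.X ^ 3
    + Polynomial.C (6*(X 0)^2 - 4*X 0*X 1 + 4*X 0*X 2 + 6*(X 1)^2 - 4*X 1*X 2 + 6*(X 2)^2)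
        * Polynomial.X ^ 2
    + Polynomial.C (4*(X 0)^3 + 4*(X 0)^2*X 1 - 4*(X 0)^2*X 2 - 4*X 0*(X 1)^2
        - 40*X 0*X 1*X 2 - 4*X 0*(X 2)^2 - 4*(X 1)^3 - 4*(X 1)^2*X 2 + 4*X 1*(X 2)^2
        + 4*(X 2)^3) * Polynomial.X
    + Polynomial.C ((X 0)^4 + 4*(X 0)^3*X 1 - 4*(X 0)^3*X 2 + 6*(X 0)^2*(X 1)^2
        - 4*(X 0)^2*X 1*X 2 + 6*(X 0)^2*(X 2)^2 + 4*X 0*(X 1)^3 + 4*X 0*(X 1)^2*X 2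
        - 4*X 0*X 1*(X 2)^2 - 4*X 0*(X 2)^3 + (X 1)^4 + 4*(X 1)^3*X 2 + 6*(X 1)^2*(X 2)^2
        + 4*X 1*(X 2)^3 + (X 2)^4)

noncomputable def encyc4Q : Polynomial (MvPolynomial (Fin 3) ℚ) :=
  Polynomial.X ^ 4 + encyc4Qrest

lemma encyc4Qrest_deg : encyc4Qrest.degree ≤ 3 := by rw [encyc4Qrest]; compute_degree

lemma encyc4Q_monic : encyc4Q.Monic := by
  rw [encyc4Q]
  exact Polynomial.monic_X_pow_add (lt_of_le_of_lt encyc4Qrest_deg (by norm_num))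

lemma encyc4Q_deg : encyc4Q.natDegree = 4 := by
  have h : encyc4Q.degree = 4 := by
    rw [encyc4Q, Polynomial.degree_add_eq_left_of_degree_lt]
    · exact Polynomial.degree_X_pow 4
    · rw [Polynomial.degree_X_pow]
      exact lt_of_le_of_lt encyc4Qrest_deg (by norm_num)
  exact Polynomial.natDegree_eq_of_degree_eq_some h

lemma encyc4Q_map : encyc4Q.map (MvPolynomial.eval (![1, 2, 3] : Fin 3 → ℚ)) =
    Polynomial.X ^ 4 + 8 * Polynomial.X ^ 3 + 64 * Polynomial.X ^ 2
      - 192 * Polynomial.X + 576 := by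
  rw [encyc4Q, encyc4Qrest]
  simp only [Polynomial.map_add, Polynomial.map_mul, Polynomial.map_pow, Polynomial.map_X,
    Polynomial.map_C, map_add, map_sub, map_mul, map_pow, map_ofNat, eval_X]
  norm_num [Matrix.cons_val_zero, Matrix.cons_val_one, Matrix.cons_val_two]
  norm_num [map_ofNat]
  ring

lemma encyc4Q_irreducible : Irreducible encyc4Q := by
  constructor
  · intro hu
    have h0 := Polynomial.natDegree_eq_zero_of_isUnit hu
    rw [encyc4Q_deg] at h0
    exact absurd h0 (by norm_num)
  · intro f g hfg
    have hlc : f.leadingCoeff * g.leadingCoeff = 1 := by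
      rw [← Polynomial.leadingCoeff_mul, ← hfg]
      exact encyc4Q_monic
    have hfu : IsUnit f.leadingCoeff := IsUnit.of_mul_eq_one _ hlc
    have hgu : IsUnit g.leadingCoeff := IsUnit.of_mul_eq_one _ (by rwa [mul_comm] at hlc)
    set φ := (MvPolynomial.eval (![1, 2, 3] : Fin 3 → ℚ)) with hφ
    have hfd : (f.map φ).natDegree = f.natDegree :=
      Polynomial.natDegree_map_of_leadingCoeff_ne_zero φ (hfu.map φ).ne_zero
    have hgd : (g.map φ).natDegree = g.natDegree :=
      Polynomial.natDegree_map_of_leadingCoeff_ne_zero φ (hgu.map φ).ne_zero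
    have hmul : Polynomial.X ^ 4 + 8 * Polynomial.X ^ 3 + 64 * Polynomial.X ^ 2
        - 192 * Polynomial.X + 576 = f.map φ * g.map φ := by
      rw [← Polynomial.map_mul, ← hfg, encyc4Q_map]
    rcases encyc4_qkey _ _ hmul with h0 | h0
    · left
      rw [hfd] at h0
      have hfC : f = Polynomial.C (f.coeff 0) := Polynomial.eq_C_of_natDegree_eq_zero h0
      rw [hfC]
      rw [Polynomial.isUnit_C]
      have : f.leadingCoeff = f.coeff 0 := by rw [Polynomial.leadingCoeff, h0]
      rwa [this] at hfu
    · right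
      rw [hgd] at h0
      have hgC : g = Polynomial.C (g.coeff 0) := Polynomial.eq_C_of_natDegree_eq_zero h0
      rw [hgC]
      rw [Polynomial.isUnit_C]
      have : g.leadingCoeff = g.coeff 0 := by rw [Polynomial.leadingCoeff, h0]
      rwa [this] at hgu

lemma encyc4_finSuccEquiv : (finSuccEquiv ℚ 3)
      ((X 0) ^ 4 + 4 * (X 0) ^ 3 * X 1 - 4 * (X 0) ^ 3 * X 2 + 4 * (X 0) ^ 3 * X 3
        + 6 * (X 0) ^ 2 * (X 1) ^ 2 - 4 * (X 0) ^ 2 * X 1 * X 2 + 4 * (X 0) ^ 2 * X 1 * X 3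
        + 6 * (X 0) ^ 2 * (X 2) ^ 2 - 4 * (X 0) ^ 2 * X 2 * X 3 + 6 * (X 0) ^ 2 * (X 3) ^ 2
        + 4 * X 0 * (X 1) ^ 3 + 4 * X 0 * (X 1) ^ 2 * X 2 - 4 * X 0 * (X 1) ^ 2 * X 3
        - 4 * X 0 * X 1 * (X 2) ^ 2 - 40 * X 0 * X 1 * X 2 * X 3 - 4 * X 0 * X 1 * (X 3) ^ 2
        - 4 * X 0 * (X 2) ^ 3 - 4 * X 0 * (X 2) ^ 2 * X 3 + 4 * X 0 * X 2 * (X 3) ^ 2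
        + 4 * X 0 * (X 3) ^ 3 + (X 1) ^ 4 + 4 * (X 1) ^ 3 * X 2 - 4 * (X 1) ^ 3 * X 3
        + 6 * (X 1) ^ 2 * (X 2) ^ 2 - 4 * (X 1) ^ 2 * X 2 * X 3 + 6 * (X 1) ^ 2 * (X 3) ^ 2
        + 4 * X 1 * (X 2) ^ 3 + 4 * X 1 * (X 2) ^ 2 * X 3 - 4 * X 1 * X 2 * (X 3) ^ 2
        - 4 * X 1 * (X 3) ^ 3 + (X 2) ^ 4 + 4 * (X 2) ^ 3 * X 3 + 6 * (X 2) ^ 2 * (X 3) ^ 2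
        + 4 * X 2 * (X 3) ^ 3 + (X 3) ^ 4 :
        MvPolynomial (Fin 4) ℚ) = encyc4Q := by
  have h0 : (finSuccEquiv ℚ 3) (X 0) = Polynomial.X := finSuccEquiv_X_zero
  have h1 : (finSuccEquiv ℚ 3) (X 1) = Polynomial.C (X 0) := by
    have he : (1 : Fin 4) = Fin.succ 0 := rfl
    rw [he, finSuccEquiv_X_succ]
  have h2 : (finSuccEquiv ℚ 3) (X 2) = Polynomial.C (X 1) := by
    have he : (2 : Fin 4) = Fin.succ 1 := rfl
    rw [he, finSuccEquiv_X_succ]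
  have h3 : (finSuccEquiv ℚ 3) (X 3) = Polynomial.C (X 2) := by
    have he : (3 : Fin 4) = Fin.succ 2 := rfl
    rw [he, finSuccEquiv_X_succ]
  rw [encyc4Q, encyc4Qrest]
  simp only [map_add, map_sub, map_mul, map_pow, map_ofNat, h0, h1, h2, h3]
  ring

/-- The quartic entry of the fourth volume of the area encyclopedia (with variables
`A, B, C, D` as `X 0, X 1, X 2, X 3`) is irreducible in `ℚ[A, B, C, D]`. -/
theorem encyc4_quartic_irreducible :
    Irreducible
      ((X 0) ^ 4 + 4 * (X 0) ^ 3 * X 1 - 4 * (X 0) ^ 3 * X 2 + 4 * (X 0) ^ 3 * X 3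
        + 6 * (X 0) ^ 2 * (X 1) ^ 2 - 4 * (X 0) ^ 2 * X 1 * X 2 + 4 * (X 0) ^ 2 * X 1 * X 3
        + 6 * (X 0) ^ 2 * (X 2) ^ 2 - 4 * (X 0) ^ 2 * X 2 * X 3 + 6 * (X 0) ^ 2 * (X 3) ^ 2
        + 4 * X 0 * (X 1) ^ 3 + 4 * X 0 * (X 1) ^ 2 * X 2 - 4 * X 0 * (X 1) ^ 2 * X 3
        - 4 * X 0 * X 1 * (X 2) ^ 2 - 40 * X 0 * X 1 * X 2 * X 3 - 4 * X 0 * X 1 * (X 3) ^ 2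
        - 4 * X 0 * (X 2) ^ 3 - 4 * X 0 * (X 2) ^ 2 * X 3 + 4 * X 0 * X 2 * (X 3) ^ 2
        + 4 * X 0 * (X 3) ^ 3 + (X 1) ^ 4 + 4 * (X 1) ^ 3 * X 2 - 4 * (X 1) ^ 3 * X 3
        + 6 * (X 1) ^ 2 * (X 2) ^ 2 - 4 * (X 1) ^ 2 * X 2 * X 3 + 6 * (X 1) ^ 2 * (X 3) ^ 2
        + 4 * X 1 * (X 2) ^ 3 + 4 * X 1 * (X 2) ^ 2 * X 3 - 4 * X 1 * X 2 * (X 3) ^ 2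
        - 4 * X 1 * (X 3) ^ 3 + (X 2) ^ 4 + 4 * (X 2) ^ 3 * X 3 + 6 * (X 2) ^ 2 * (X 3) ^ 2
        + 4 * X 2 * (X 3) ^ 3 + (X 3) ^ 4 :
        MvPolynomial (Fin 4) ℚ) := by
  rw [← MulEquiv.irreducible_iff (finSuccEquiv ℚ 3), encyc4_finSuccEquiv]
  exact encyc4Q_irreducible
end
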